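/- arXiv:2003.10123 — 6 statements merged into one kernel-verified Lean document; each statement's English description precedes it below -/
import Mathlib

section
/- For every k ∈ ℕ with k ≥ 1, every j ∈ {0,1,2}, and every (x,y) in the closed rectangle [0,π] × [-1,0], the function f_k(x,y) = (2 / ((2k-1)·π·sinh((2k-1)·π²/2))) · cosh((2k-1)·(π/2)·(x-π)) · cos((2k-1)·(π/2)·(y+1)) satisfies | ∂^j/∂x^j ∂^{2-j}/∂y^{2-j} f_k(x,y) | ≤ (√2/2)·π·(2k-1). -/
open Real

/-- The function `f_k = Nψ_k`, image of the basis function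
`ψ_k(y) = √2 cos((2k-1)(π/2)(y+1))` under the partial Neumann map. -/
noncomputable def fNeu (k : ℕ) (x y : ℝ) : ℝ :=
  (2 / ((2 * (k : ℝ) - 1) * π * Real.sinh ((2 * (k : ℝ) - 1) * π ^ 2 / 2))) *
    Real.cosh ((2 * (k : ℝ) - 1) * (π / 2) * (x - π)) *
    Real.cos ((2 * (k : ℝ) - 1) * (π / 2) * (y + 1))

private lemma hd_lin_sub (a c x : ℝ) : HasDerivAt (fun t => a * (t - c)) a x := by
  simpa using ((hasDerivAt_id x).sub_const c).const_mul a

private lemma hd_lin_add (a x : ℝ) : HasDerivAt (fun t => a * (t + 1)) a x := by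
  simpa using ((hasDerivAt_id x).add_const (1:ℝ)).const_mul a

private lemma hd_cosh (a c x : ℝ) :
    HasDerivAt (fun t => Real.cosh (a * (t - c))) (a * Real.sinh (a * (x - c))) x := by
  simpa [mul_comm, Function.comp_def] using (Real.hasDerivAt_cosh (a * (x - c))).comp x (hd_lin_sub a c x)

private lemma hd_sinh (a c x : ℝ) :
    HasDerivAt (fun t => Real.sinh (a * (t - c))) (a * Real.cosh (a * (x - c))) x := by
  simpa [mul_comm, Function.comp_def] using (Real.hasDerivAt_sinh (a * (x - c))).comp x (hd_lin_sub a c x)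

private lemma hd_cos (a x : ℝ) :
    HasDerivAt (fun t => Real.cos (a * (t + 1))) (-(a * Real.sin (a * (x + 1)))) x := by
  simpa [mul_comm, neg_mul, mul_neg, Function.comp_def] using
    (Real.hasDerivAt_cos (a * (x + 1))).comp x (hd_lin_add a x)

private lemma hd_sin (a x : ℝ) :
    HasDerivAt (fun t => Real.sin (a * (t + 1))) (a * Real.cos (a * (x + 1))) x := by
  simpa [mul_comm, Function.comp_def] using (Real.hasDerivAt_sin (a * (x + 1))).comp x (hd_lin_add a x)

private lemma derivX (k : ℕ) (y : ℝ) :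
    deriv (fun t => fNeu k t y) = fun t =>
      (2 / ((2 * (k : ℝ) - 1) * π * Real.sinh ((2 * (k : ℝ) - 1) * π ^ 2 / 2)) *
        ((2 * (k : ℝ) - 1) * (π / 2) *
          Real.sinh ((2 * (k : ℝ) - 1) * (π / 2) * (t - π)))) *
      Real.cos ((2 * (k : ℝ) - 1) * (π / 2) * (y + 1)) := by
  funext t
  exact (((hd_cosh ((2 * (k : ℝ) - 1) * (π / 2)) π t).const_mul
      (2 / ((2 * (k : ℝ) - 1) * π * Real.sinh ((2 * (k : ℝ) - 1) * π ^ 2 / 2)))).mul_const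
      (Real.cos ((2 * (k : ℝ) - 1) * (π / 2) * (y + 1)))).deriv

private lemma derivY (k : ℕ) (t : ℝ) :
    deriv (fNeu k t) = fun s =>
      (2 / ((2 * (k : ℝ) - 1) * π * Real.sinh ((2 * (k : ℝ) - 1) * π ^ 2 / 2)) *
        Real.cosh ((2 * (k : ℝ) - 1) * (π / 2) * (t - π))) *
      (-((2 * (k : ℝ) - 1) * (π / 2) *
          Real.sin ((2 * (k : ℝ) - 1) * (π / 2) * (s + 1)))) := by
  funext s
  exact ((hd_cos ((2 * (k : ℝ) - 1) * (π / 2)) s).const_mul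
      (2 / ((2 * (k : ℝ) - 1) * π * Real.sinh ((2 * (k : ℝ) - 1) * π ^ 2 / 2)) *
        Real.cosh ((2 * (k : ℝ) - 1) * (π / 2) * (t - π)))).deriv

private lemma bound_helper (CA u v B T : ℝ) (hCA : 0 < CA)
    (hu : |u| ≤ B) (hv : |v| ≤ 1) (hT : CA * B ≤ T) :
    |CA * (u * v)| ≤ T := by
  have hB : 0 ≤ B := (abs_nonneg u).trans hu
  have huv : |u * v| ≤ B := by
    rw [abs_mul]
    calc |u| * |v| ≤ B * 1 := mul_le_mul hu hv (abs_nonneg v) hB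
    _ = B := mul_one B
  rw [abs_mul, abs_of_pos hCA]
  calc CA * |u * v| ≤ CA * B := mul_le_mul_of_nonneg_left huv hCA.le
  _ ≤ T := hT

/-- Uniform bound `(√2/2) π (2k-1)` for all the second order partial derivatives
`∂^j/∂x^j ∂^{2-j}/∂y^{2-j} f_k`, `j ∈ {0,1,2}`, on the closed rectangle `[0,π] × [-1,0]`. -/
theorem fNeu_second_derivatives_bound (k : ℕ) (hk : 1 ≤ k)
    (x : ℝ) (hx : x ∈ Set.Icc (0:ℝ) π) (y : ℝ) (hy : y ∈ Set.Icc (-1:ℝ) 0) :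
    |deriv (deriv (fun t => fNeu k t y)) x| ≤ (Real.sqrt 2 / 2) * π * (2 * (k : ℝ) - 1)
    ∧ |deriv (fun t => deriv (fNeu k t) y) x| ≤ (Real.sqrt 2 / 2) * π * (2 * (k : ℝ) - 1)
    ∧ |deriv (deriv (fNeu k x)) y| ≤ (Real.sqrt 2 / 2) * π * (2 * (k : ℝ) - 1) := by
  have hπ : (0:ℝ) < π := Real.pi_pos
  have hk1 : (1:ℝ) ≤ (k:ℝ) := by exact_mod_cast hk
  set m : ℝ := 2 * (k : ℝ) - 1 with hm_def
  have hm : (1:ℝ) ≤ m := by rw [hm_def]; linarith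
  have hm0 : (0:ℝ) < m := by linarith
  set a : ℝ := m * (π / 2) with ha_def
  have ha0 : 0 < a := mul_pos hm0 (by positivity)
  set L : ℝ := m * π ^ 2 / 2 with hL_def
  have haL : a * π = L := by rw [ha_def, hL_def]; ring
  set S : ℝ := Real.sinh L with hS_def
  have hπ3 : (3:ℝ) < π := Real.pi_gt_three
  have hL1 : (1:ℝ) < L := by
    rw [hL_def]
    nlinarith [mul_pos hπ hπ, hm, hπ3]
  have hL0 : (0:ℝ) < L := by linarith
  have hS1 : (1:ℝ) ≤ S := by
    have := Real.self_lt_sinh_iff.mpr hL0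
    rw [hS_def]; linarith
  have hS0 : (0:ℝ) < S := by linarith
  have hC0 : (0:ℝ) < 2 / (m * π * S) :=
    div_pos two_pos (mul_pos (mul_pos hm0 hπ) hS0)
  have hCa2 : (0:ℝ) < 2 / (m * π * S) * a ^ 2 := mul_pos hC0 (pow_pos ha0 2)
  have h12 : (1:ℝ) ≤ Real.sqrt 2 := by
    nlinarith [Real.sq_sqrt (show (0:ℝ) ≤ 2 by norm_num), Real.sqrt_nonneg 2]
  -- cosh L ≤ √2 * S
  have hcoshS : Real.cosh L ≤ Real.sqrt 2 * S := by
    have h2 : Real.sqrt 2 ^ 2 = 2 := Real.sq_sqrt (by norm_num)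
    have hsq : Real.cosh L ^ 2 ≤ (Real.sqrt 2 * S) ^ 2 := by
      rw [mul_pow, h2]
      have := Real.cosh_sq L
      rw [hS_def]
      nlinarith [hS1]
    calc Real.cosh L = Real.sqrt (Real.cosh L ^ 2) :=
          (Real.sqrt_sq (Real.cosh_pos L).le).symm
    _ ≤ Real.sqrt ((Real.sqrt 2 * S) ^ 2) := Real.sqrt_le_sqrt hsq
    _ = Real.sqrt 2 * S := Real.sqrt_sq (by positivity)
  -- |a*(x-π)| ≤ L
  have hxL : |a * (x - π)| ≤ L := by
    rw [abs_mul, abs_of_pos ha0]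
    have hxp : |x - π| ≤ π := by
      rw [abs_le]; constructor <;> linarith [hx.1, hx.2]
    calc a * |x - π| ≤ a * π := mul_le_mul_of_nonneg_left hxp ha0.le
    _ = L := haL
  have hcosh_le : Real.cosh (a * (x - π)) ≤ Real.cosh L := by
    rw [Real.cosh_le_cosh]
    rwa [abs_of_pos hL0]
  have hsinh_le : |Real.sinh (a * (x - π))| ≤ S := by
    rw [Real.abs_sinh, hS_def, Real.sinh_le_sinh]
    exact hxL
  -- key identity
  have hkey : 2 / (m * π * S) * a ^ 2 * (Real.sqrt 2 * S)
      = Real.sqrt 2 / 2 * π * m := by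
    rw [ha_def]
    field_simp
  have hT1 : 2 / (m * π * S) * a ^ 2 * Real.cosh L ≤ Real.sqrt 2 / 2 * π * m := by
    calc 2 / (m * π * S) * a ^ 2 * Real.cosh L
        ≤ 2 / (m * π * S) * a ^ 2 * (Real.sqrt 2 * S) :=
          mul_le_mul_of_nonneg_left hcoshS hCa2.le
    _ = Real.sqrt 2 / 2 * π * m := hkey
  have hT2 : 2 / (m * π * S) * a ^ 2 * S ≤ Real.sqrt 2 / 2 * π * m := by
    calc 2 / (m * π * S) * a ^ 2 * S
        ≤ 2 / (m * π * S) * a ^ 2 * (Real.sqrt 2 * S) := by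
          refine mul_le_mul_of_nonneg_left ?_ hCa2.le
          nlinarith [hS0, h12]
    _ = Real.sqrt 2 / 2 * π * m := hkey
  have hcosh_pos := Real.cosh_pos (a * (x - π))
  have habs_cosh : |Real.cosh (a * (x - π))| ≤ Real.cosh L := by
    rwa [abs_of_pos hcosh_pos]
  refine ⟨?_, ?_, ?_⟩
  · -- ∂xx
    have hval : deriv (deriv (fun t => fNeu k t y)) x =
        (2 / (m * π * S) * (a * (a * Real.cosh (a * (x - π))))) *
          Real.cos (a * (y + 1)) := by
      rw [derivX]
      exact ((((hd_sinh a π x).const_mul a).const_mul (2 / (m * π * S))).mul_const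
        (Real.cos (a * (y + 1)))).deriv
    rw [hval,
      show (2 / (m * π * S) * (a * (a * Real.cosh (a * (x - π))))) *
          Real.cos (a * (y + 1)) =
        2 / (m * π * S) * a ^ 2 *
          (Real.cosh (a * (x - π)) * Real.cos (a * (y + 1))) by ring]
    exact bound_helper _ _ _ _ _ hCa2 habs_cosh (Real.abs_cos_le_one _) hT1
  · -- ∂xy
    have hval : deriv (fun t => deriv (fNeu k t) y) x =
        (2 / (m * π * S) * (a * Real.sinh (a * (x - π)))) *
          (-(a * Real.sin (a * (y + 1)))) := by
      simp only [derivY]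
      exact (((hd_cosh a π x).const_mul (2 / (m * π * S))).mul_const
        (-(a * Real.sin (a * (y + 1))))).deriv
    rw [hval,
      show (2 / (m * π * S) * (a * Real.sinh (a * (x - π)))) *
          (-(a * Real.sin (a * (y + 1)))) =
        2 / (m * π * S) * a ^ 2 *
          (Real.sinh (a * (x - π)) * (-Real.sin (a * (y + 1)))) by ring]
    refine bound_helper _ _ _ _ _ hCa2 hsinh_le ?_ hT2
    rw [abs_neg]; exact Real.abs_sin_le_one _
  · -- ∂yy
    have hval : deriv (deriv (fNeu k x)) y =
        (2 / (m * π * S) * Real.cosh (a * (x - π))) *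
          (-(a * (a * Real.cos (a * (y + 1))))) := by
      rw [derivY k x]
      exact ((((hd_sin a y).const_mul a).neg).const_mul
        (2 / (m * π * S) * Real.cosh (a * (x - π)))).deriv
    rw [hval,
      show (2 / (m * π * S) * Real.cosh (a * (x - π))) *
          (-(a * (a * Real.cos (a * (y + 1))))) =
        2 / (m * π * S) * a ^ 2 *
          (Real.cosh (a * (x - π)) * (-Real.cos (a * (y + 1)))) by ring]
    refine bound_helper _ _ _ _ _ hCa2 habs_cosh ?_ hT1
    rw [abs_neg]; exact Real.abs_cos_le_one _
end

section
/- (Hilbert's inequality.) For every square-summable sequence (a_k)_{k≥1} of complex numbers, Σ_{j≥1} Σ_{k≥1} |a_j|·|a_k| / (j + k - 1) ≤ π · Σ_{k≥1} |a_k|². -/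
open Real

namespace HilbertAuxLemmas

noncomputable def Gfun (c x : ℝ) : ℝ := 2 / Real.sqrt c * Real.arctan (Real.sqrt x / Real.sqrt c)

lemma hasDerivAt_Gfun {c x : ℝ} (hc : 0 < c) (hx : 0 < x) :
    HasDerivAt (Gfun c) (1 / (Real.sqrt x * (x + c))) x := by
  have h1 : HasDerivAt Real.sqrt (1 / (2 * Real.sqrt x)) x := Real.hasDerivAt_sqrt hx.ne'
  have h2 : HasDerivAt (fun y => Real.sqrt y / Real.sqrt c)
      ((1 / (2 * Real.sqrt x)) / Real.sqrt c) x := h1.div_const _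
  have h3 := (Real.hasDerivAt_arctan (Real.sqrt x / Real.sqrt c)).comp x h2
  have h4 := h3.const_mul (2 / Real.sqrt c)
  refine h4.congr_deriv ?_
  symm
  have sx : Real.sqrt x > 0 := Real.sqrt_pos.2 hx
  have sc : Real.sqrt c > 0 := Real.sqrt_pos.2 hc
  have hx2 : Real.sqrt x ^ 2 = x := Real.sq_sqrt hx.le
  have hc2 : Real.sqrt c ^ 2 = c := Real.sq_sqrt hc.le
  rw [div_pow, hx2, hc2]
  field_simp
  rw [hc2]; ring

lemma continuous_Gfun (c : ℝ) : Continuous (Gfun c) :=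
  continuous_const.mul (Real.continuous_arctan.comp (Real.continuous_sqrt.div_const _))

lemma midpoint_ineq {c a b m : ℝ} (hc : 0 < c) (ha : 0 < a) (hb : 0 < b)
    (hm : (a + b) / 2 = m) :
    2 * (1 / (Real.sqrt m * (m + c))) ≤ 1 / (Real.sqrt a * (a + c)) + 1 / (Real.sqrt b * (b + c)) := by
  have hm0 : 0 < m := by nlinarith
  set p := Real.sqrt a * (a + c) with hp
  set q := Real.sqrt b * (b + c) with hq
  have hp0 : 0 < p := by positivity
  have hq0 : 0 < q := by positivity
  have key : Real.sqrt (p * q) ≤ Real.sqrt m * (m + c) := by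
    have h1 : p * q = (Real.sqrt a * Real.sqrt b) * ((a + c) * (b + c)) := by ring
    have h2 : Real.sqrt a * Real.sqrt b ≤ m := by
      rw [← Real.sqrt_mul_self hm0.le, ← Real.sqrt_mul ha.le, ]
      apply Real.sqrt_le_sqrt
      nlinarith [sq_nonneg (a - b)]
    have h3 : (a + c) * (b + c) ≤ (m + c) ^ 2 := by nlinarith [sq_nonneg (a - b)]
    calc Real.sqrt (p * q) ≤ Real.sqrt (m * (m + c) ^ 2) := by
            apply Real.sqrt_le_sqrt; rw [h1]
            have := mul_nonneg (Real.sqrt_nonneg a) (Real.sqrt_nonneg b)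
            nlinarith [mul_pos (mul_pos ha hb) (mul_pos (by linarith : (0:ℝ) < a + c) (by linarith : (0:ℝ) < b + c))]
      _ = Real.sqrt m * (m + c) := by
            rw [Real.sqrt_mul hm0.le, Real.sqrt_sq (by positivity)]
  have hsq : 0 < Real.sqrt (p * q) := Real.sqrt_pos.2 (by positivity)
  have h4 : 2 / Real.sqrt (p * q) ≤ 1 / p + 1 / q := by
    rw [div_add_div _ _ hp0.ne' hq0.ne', div_le_div_iff₀ hsq (by positivity)]
    have h5 : Real.sqrt (p * q) * Real.sqrt (p * q) = p * q := Real.mul_self_sqrt (by positivity)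
    nlinarith [sq_nonneg (Real.sqrt p - Real.sqrt q), Real.sq_sqrt hp0.le, Real.sq_sqrt hq0.le,
      Real.sqrt_mul_self hp0.le, Real.sqrt_mul_self hq0.le,
      Real.sqrt_mul hp0.le q, sq_nonneg (Real.sqrt (p*q))]
  calc 2 * (1 / (Real.sqrt m * (m + c))) = 2 / (Real.sqrt m * (m + c)) := by ring
    _ ≤ 2 / Real.sqrt (p * q) := by
        apply div_le_div_of_nonneg_left (by norm_num) hsq key
    _ ≤ 1 / p + 1 / q := h4
lemma step_ineq {c : ℝ} (hc : 0 < c) (k : ℕ) :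
    1 / (Real.sqrt ((k : ℝ) + 1/2) * (((k : ℝ) + 1/2) + c))
      ≤ Gfun c ((k : ℝ) + 1) - Gfun c (k : ℝ) := by
  set m : ℝ := (k : ℝ) + 1/2 with hmdef
  have hm0 : 0 < m := by positivity
  set fm : ℝ := 1 / (Real.sqrt m * (m + c)) with hfm
  set ψ : ℝ → ℝ := fun x => Gfun c x - Gfun c (2 * m - x) - 2 * fm * (x - m) with hψ
  have hcont : ContinuousOn ψ (Set.Icc m (m + 1/2)) := by
    apply Continuous.continuousOn
    exact ((continuous_Gfun c).sub ((continuous_Gfun c).comp (by continuity))).sub (by continuity)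
  have hderiv : ∀ x ∈ Set.Ioo m (m + 1/2),
      HasDerivAt ψ (1 / (Real.sqrt x * (x + c)) + 1 / (Real.sqrt (2*m-x) * ((2*m-x) + c)) - 2 * fm) x := by
    intro x hx
    have hx0 : 0 < x := lt_trans hm0 hx.1
    have hx1 : 0 < 2 * m - x := by
      have : x < m + 1/2 := hx.2
      have : (k : ℝ) ≥ 0 := Nat.cast_nonneg k
      simp only [hmdef] at *
      linarith
    have d1 : HasDerivAt (fun x => Gfun c x) (1 / (Real.sqrt x * (x + c))) x := hasDerivAt_Gfun hc hx0
    have dinner : HasDerivAt (fun x : ℝ => 2 * m - x) (-1) x := by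
      simpa using (hasDerivAt_id x).const_sub (2 * m)
    have d2 : HasDerivAt (fun x => Gfun c (2 * m - x))
        ((1 / (Real.sqrt (2*m-x) * ((2*m-x) + c))) * (-1)) x :=
      (hasDerivAt_Gfun hc hx1).comp x dinner
    have d3 : HasDerivAt (fun x : ℝ => 2 * fm * (x - m)) (2 * fm) x := by
      simpa using ((hasDerivAt_id x).sub_const m).const_mul (2 * fm)
    have := (d1.sub d2).sub d3
    refine this.congr_deriv ?_
    ring
  have hmono : MonotoneOn ψ (Set.Icc m (m + 1/2)) := by
    apply monotoneOn_of_deriv_nonneg (convex_Icc _ _) hcont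
    · intro x hx
      rw [interior_Icc] at hx
      exact ((hderiv x hx).differentiableAt).differentiableWithinAt
    · intro x hx
      rw [interior_Icc] at hx
      rw [(hderiv x hx).deriv]
      have hx0 : 0 < x := lt_trans hm0 hx.1
      have hx1 : 0 < 2 * m - x := by
        have h2 : x < m + 1/2 := hx.2
        have h3 : (0:ℝ) ≤ (k : ℝ) := Nat.cast_nonneg k
        simp only [hmdef] at h2 ⊢
        linarith
      have := midpoint_ineq hc hx0 hx1 (by ring : (x + (2*m-x))/2 = m)
      rw [← hfm] at this
      linarith
  have h1 : ψ m ≤ ψ (m + 1/2) := by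
    apply hmono (Set.left_mem_Icc.2 (by linarith)) (Set.right_mem_Icc.2 (by linarith)) (by linarith)
  have hψm : ψ m = 0 := by
    have e0 : 2 * m - m = m := by ring
    simp [hψ, e0]
  have e1 : m + 1/2 = (k : ℝ) + 1 := by rw [hmdef]; ring
  have e2 : 2 * m - (m + 1/2) = (k : ℝ) := by rw [hmdef]; ring
  have hψm2 : ψ (m + 1/2) = Gfun c ((k:ℝ)+1) - Gfun c (k:ℝ) - fm := by
    simp only [hψ, e2, add_sub_cancel_left]
    rw [e1]
    ring
  rw [hψm, hψm2] at h1
  linarith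
lemma partial_sum_le {c : ℝ} (hc : 0 < c) (n : ℕ) :
    ∑ k ∈ Finset.range n, 1 / (Real.sqrt ((k : ℝ) + 1/2) * (((k : ℝ) + 1/2) + c))
      ≤ π / Real.sqrt c := by
  have h1 : ∑ k ∈ Finset.range n, 1 / (Real.sqrt ((k : ℝ) + 1/2) * (((k : ℝ) + 1/2) + c))
      ≤ ∑ k ∈ Finset.range n, (Gfun c ((k : ℝ) + 1) - Gfun c (k : ℝ)) :=
    Finset.sum_le_sum fun k _ => step_ineq hc k
  have h2 : ∑ k ∈ Finset.range n, (Gfun c ((k : ℝ) + 1) - Gfun c (k : ℝ))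
      = Gfun c (n : ℝ) - Gfun c ((0 : ℕ) : ℝ) := by
    have := Finset.sum_range_sub (fun k : ℕ => Gfun c (k : ℝ)) n
    simp only [Nat.cast_add, Nat.cast_one] at this
    simpa using this
  have h3 : Gfun c ((0 : ℕ) : ℝ) = 0 := by
    simp [Gfun]
  have h4 : Gfun c (n : ℝ) ≤ π / Real.sqrt c := by
    unfold Gfun
    have ha : Real.arctan (Real.sqrt (n : ℝ) / Real.sqrt c) ≤ π / 2 :=
      (Real.arctan_lt_pi_div_two _).le
    have hsc : 0 < Real.sqrt c := Real.sqrt_pos.2 hc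
    calc 2 / Real.sqrt c * Real.arctan (Real.sqrt (n:ℝ) / Real.sqrt c)
        ≤ 2 / Real.sqrt c * (π / 2) := by
          apply mul_le_mul_of_nonneg_left ha (by positivity)
      _ = π / Real.sqrt c := by field_simp
  rw [h2, h3] at h1
  linarith

lemma key_summable {c : ℝ} (hc : 0 < c) :
    Summable fun k : ℕ => 1 / (Real.sqrt ((k : ℝ) + 1/2) * (((k : ℝ) + 1/2) + c)) :=
  summable_of_sum_range_le (fun k => by positivity) (partial_sum_le hc)

lemma key_tsum_le {c : ℝ} (hc : 0 < c) :
    ∑' k : ℕ, 1 / (Real.sqrt ((k : ℝ) + 1/2) * (((k : ℝ) + 1/2) + c)) ≤ π / Real.sqrt c :=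
  Real.tsum_le_of_sum_range_le (fun k => by positivity) (partial_sum_le hc)
lemma pointwise_ineq (x y u v : ℝ) (hx : 0 ≤ x) (hy : 0 ≤ y) (hu : 0 < u) (hv : 0 < v) :
    x * y / (u^2 + v^2) ≤ x^2 * u / 2 * (1 / (v * (v^2 + u^2)))
      + y^2 * v / 2 * (1 / (u * (u^2 + v^2))) := by
  have hR : x^2 * u / 2 * (1 / (v * (v^2 + u^2))) + y^2 * v / 2 * (1 / (u * (u^2 + v^2)))
      = (x^2 * u^2 + y^2 * v^2) / (2 * u * v * (u^2 + v^2)) := by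
    field_simp
    ring
  rw [hR, div_le_div_iff₀ (by positivity) (by positivity)]
  nlinarith [sq_nonneg (x * u - y * v), mul_pos hu hv, sq_nonneg (x*v - y*u)]


end HilbertAuxLemmas

open HilbertAuxLemmas

set_option maxHeartbeats 1000000 in
/-- Hilbert's inequality: for every square-summable sequence `(a_k)_{k≥1}` of complex
numbers, `Σ_{j,k≥1} |a_j| |a_k| / (j+k-1) ≤ π Σ_{k≥1} |a_k|²`.
(The sequence is encoded as `a : ℕ → ℂ` with `a k` standing for `a_{k+1}`, so the
denominator `j + k - 1` becomes `j + k + 1`.) -/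
theorem hilbert_inequality (a : ℕ → ℂ) (h : Summable fun k : ℕ => ‖a k‖ ^ 2) :
    (Summable fun p : ℕ × ℕ => ‖a p.1‖ * ‖a p.2‖ / ((p.1 : ℝ) + (p.2 : ℝ) + 1))
    ∧ ∑' p : ℕ × ℕ, ‖a p.1‖ * ‖a p.2‖ / ((p.1 : ℝ) + (p.2 : ℝ) + 1)
        ≤ π * ∑' k : ℕ, ‖a k‖ ^ 2 := by
  have hw0 : ∀ k : ℕ, (0:ℝ) < (k : ℝ) + 1/2 := fun k => by positivity
  have hsw : ∀ k : ℕ, 0 < Real.sqrt ((k : ℝ) + 1/2) := fun k => Real.sqrt_pos.2 (hw0 k)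
  have hsq : ∀ k : ℕ, Real.sqrt ((k : ℝ) + 1/2) ^ 2 = (k : ℝ) + 1/2 :=
    fun k => Real.sq_sqrt (hw0 k).le
  set M1 : ℕ × ℕ → ℝ := fun p => (‖a p.1‖^2 * Real.sqrt ((p.1 : ℝ) + 1/2) / 2) *
      (1 / (Real.sqrt ((p.2 : ℝ) + 1/2) * (((p.2 : ℝ) + 1/2) + ((p.1 : ℝ) + 1/2)))) with hM1def
  have hM1nonneg : ∀ p, 0 ≤ M1 p := fun p => by positivity
  have hM1row : ∀ j : ℕ, (fun k => M1 (j, k)) = fun k : ℕ =>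
      (‖a j‖^2 * Real.sqrt ((j : ℝ) + 1/2) / 2) *
      (1 / (Real.sqrt ((k : ℝ) + 1/2) * (((k : ℝ) + 1/2) + ((j : ℝ) + 1/2)))) := fun j => rfl
  have hrow : ∀ j : ℕ, Summable fun k => M1 (j, k) := by
    intro j
    rw [hM1row j]
    exact (key_summable (hw0 j)).mul_left _
  have hrowsum : ∀ j : ℕ, ∑' k, M1 (j, k) ≤ (π / 2) * ‖a j‖^2 := by
    intro j
    rw [tsum_congr (fun k => congrFun (hM1row j) k), tsum_mul_left]
    calc (‖a j‖^2 * Real.sqrt ((j : ℝ) + 1/2) / 2) *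
        ∑' k : ℕ, 1 / (Real.sqrt ((k : ℝ) + 1/2) * (((k : ℝ) + 1/2) + ((j : ℝ) + 1/2)))
        ≤ (‖a j‖^2 * Real.sqrt ((j : ℝ) + 1/2) / 2) * (π / Real.sqrt ((j : ℝ) + 1/2)) :=
          mul_le_mul_of_nonneg_left (key_tsum_le (hw0 j)) (by positivity)
      _ = (π / 2) * ‖a j‖^2 := by
          field_simp
  have hM1sum : Summable M1 := by
    rw [summable_prod_of_nonneg hM1nonneg]
    refine ⟨hrow, ?_⟩
    apply Summable.of_nonneg_of_le (fun j => tsum_nonneg (fun k => hM1nonneg (j, k))) hrowsum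
    exact h.mul_left (π / 2)
  have htsumM1 : ∑' p, M1 p ≤ (π / 2) * ∑' k : ℕ, ‖a k‖^2 := by
    rw [Summable.tsum_prod' hM1sum hrow]
    calc ∑' j, ∑' k, M1 (j, k) ≤ ∑' j : ℕ, (π / 2) * ‖a j‖^2 :=
      Summable.tsum_le_tsum hrowsum ((summable_prod_of_nonneg hM1nonneg).1 hM1sum).2 (h.mul_left (π / 2))
      _ = (π / 2) * ∑' k : ℕ, ‖a k‖^2 := tsum_mul_left
  set M2 : ℕ × ℕ → ℝ := fun p => M1 (p.2, p.1) with hM2def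
  have hM2sum : Summable M2 := (Equiv.prodComm ℕ ℕ).summable_iff.2 hM1sum
  have htsumM2 : ∑' p, M2 p = ∑' p, M1 p := (Equiv.prodComm ℕ ℕ).tsum_eq M1
  have hpt : ∀ p : ℕ × ℕ, ‖a p.1‖ * ‖a p.2‖ / ((p.1 : ℝ) + (p.2 : ℝ) + 1) ≤ M1 p + M2 p := by
    rintro ⟨j, k⟩
    have hd : (j : ℝ) + (k : ℝ) + 1
        = Real.sqrt ((j : ℝ) + 1/2) ^ 2 + Real.sqrt ((k : ℝ) + 1/2) ^ 2 := by
      rw [hsq j, hsq k]; ring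
    have := pointwise_ineq ‖a j‖ ‖a k‖ (Real.sqrt ((j : ℝ) + 1/2)) (Real.sqrt ((k : ℝ) + 1/2))
      (norm_nonneg _) (norm_nonneg _) (hsw j) (hsw k)
    simp only [hM1def, hM2def]
    rw [hd]
    convert this using 2 <;> rw [hsq, hsq] <;> ring
  have hTnonneg : ∀ p : ℕ × ℕ, 0 ≤ ‖a p.1‖ * ‖a p.2‖ / ((p.1 : ℝ) + (p.2 : ℝ) + 1) :=
    fun p => by positivity
  have hTsum : Summable fun p : ℕ × ℕ => ‖a p.1‖ * ‖a p.2‖ / ((p.1 : ℝ) + (p.2 : ℝ) + 1) :=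
    Summable.of_nonneg_of_le hTnonneg hpt (hM1sum.add hM2sum)
  refine ⟨hTsum, ?_⟩
  calc ∑' p : ℕ × ℕ, ‖a p.1‖ * ‖a p.2‖ / ((p.1 : ℝ) + (p.2 : ℝ) + 1)
      ≤ ∑' p : ℕ × ℕ, (M1 p + M2 p) := Summable.tsum_le_tsum hpt hTsum (hM1sum.add hM2sum)
    _ = ∑' p, M1 p + ∑' p, M2 p := Summable.tsum_add hM1sum hM2sum
    _ = 2 * ∑' p, M1 p := by rw [htsumM2]; ring
    _ ≤ 2 * ((π / 2) * ∑' k : ℕ, ‖a k‖^2) := by linarith [htsumM1]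
    _ = π * ∑' k : ℕ, ‖a k‖^2 := by ring
end

section
/- There exists a constant C > 0 such that for every square-summable sequence (v_k)_{k≥1} of complex numbers, ∫_0^π | Σ_{k≥1} b_k·v_k·cosh((2k-1)·(π/2)·(x-π)) |² dx ≤ C · Σ_{k≥1} |v_k|², where b_k = (-1)^k·√2 / sinh((2k-1)·π²/2). -/
open Real

open MeasureTheory

open Real

/-- Cauchy–Schwarz for tsums of square roots. -/
lemma my_tsum_sqrt_mul {p q : ℕ → ℝ} (hp : ∀ k, 0 ≤ p k) (hq : ∀ k, 0 ≤ q k)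
    (hps : Summable p) (hqs : Summable q) :
    ∑' k, Real.sqrt (p k * q k) ≤ Real.sqrt (∑' k, p k) * Real.sqrt (∑' k, q k) := by
  have hsum : Summable fun k => Real.sqrt (p k * q k) := by
    apply Summable.of_nonneg_of_le (fun k => Real.sqrt_nonneg _) (fun k => ?_)
      ((hps.add hqs).div_const 2)
    rw [show (p k + q k)/2 = Real.sqrt (((p k + q k)/2)^2) from
      (Real.sqrt_sq (by have := hp k; have := hq k; positivity)).symm]
    apply Real.sqrt_le_sqrt
    nlinarith [sq_nonneg (p k - q k)]
  apply Summable.tsum_le_of_sum_le hsum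
  intro s
  have hcs := Finset.sum_sq_le_sum_mul_sum_of_sq_eq_mul s (r := fun k => Real.sqrt (p k * q k))
    (f := p) (g := q) (fun i _ => hp i) (fun i _ => hq i)
    (fun i _ => sq_sqrt (mul_nonneg (hp i) (hq i)))
  have h1 : ∑ i ∈ s, p i ≤ ∑' k, p k := Summable.sum_le_tsum s (fun i _ => hp i) hps
  have h2 : ∑ i ∈ s, q i ≤ ∑' k, q k := Summable.sum_le_tsum s (fun i _ => hq i) hqs
  have h3 : (∑ i ∈ s, Real.sqrt (p i * q i))^2 ≤ (∑' k, p k) * (∑' k, q k) := by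
    calc (∑ i ∈ s, Real.sqrt (p i * q i))^2 ≤ (∑ i ∈ s, p i) * ∑ i ∈ s, q i := hcs
    _ ≤ (∑' k, p k) * (∑' k, q k) := by
        apply mul_le_mul h1 h2 (Finset.sum_nonneg (fun i _ => hq i)) (tsum_nonneg hp)
  have h4 : 0 ≤ ∑ i ∈ s, Real.sqrt (p i * q i) := Finset.sum_nonneg fun i _ => Real.sqrt_nonneg _
  calc ∑ i ∈ s, Real.sqrt (p i * q i)
      = Real.sqrt ((∑ i ∈ s, Real.sqrt (p i * q i))^2) := (Real.sqrt_sq h4).symm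
    _ ≤ Real.sqrt ((∑' k, p k) * (∑' k, q k)) := Real.sqrt_le_sqrt h3
    _ = Real.sqrt (∑' k, p k) * Real.sqrt (∑' k, q k) :=
        Real.sqrt_mul (tsum_nonneg hp) _

open Real

lemma my_tele1 (N : ℕ) :
    1 / Real.sqrt (2*(N:ℝ)+1) ≤ Real.sqrt (2*(N:ℝ)+2) - Real.sqrt (2*(N:ℝ)) := by
  set a := Real.sqrt (2*(N:ℝ)) with ha
  set b := Real.sqrt (2*(N:ℝ)+1) with hb
  set c := Real.sqrt (2*(N:ℝ)+2) with hc
  have ha2 : a^2 = 2*(N:ℝ) := Real.sq_sqrt (by positivity)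
  have hb2 : b^2 = 2*(N:ℝ)+1 := Real.sq_sqrt (by positivity)
  have hc2 : c^2 = 2*(N:ℝ)+2 := Real.sq_sqrt (by positivity)
  have ha0 : 0 ≤ a := Real.sqrt_nonneg _
  have hc0 : 0 ≤ c := Real.sqrt_nonneg _
  have hb1 : 1 ≤ b := Real.one_le_sqrt.mpr (by have h0 : (0:ℝ) ≤ (N:ℝ) := Nat.cast_nonneg N; linarith)
  have hb0 : 0 < b := lt_of_lt_of_le one_pos hb1
  have h2 : a + c ≤ 2*b := by nlinarith [sq_nonneg (a+c-2*b), sq_nonneg (a-c)]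
  have hca : 0 ≤ c - a := by
    have : a ≤ c := Real.sqrt_le_sqrt (by linarith)
    linarith
  rw [div_le_iff₀ hb0]
  nlinarith [mul_le_mul_of_nonneg_left h2 hca]

lemma my_tele2 (N : ℕ) (hN : 1 ≤ N) :
    1 / (Real.sqrt (2*(N:ℝ)+1) * (2*(N:ℝ)+1)) ≤
      1 / Real.sqrt (2*(N:ℝ)) - 1 / Real.sqrt (2*(N:ℝ)+2) := by
  set a := Real.sqrt (2*(N:ℝ)) with ha
  set b := Real.sqrt (2*(N:ℝ)+1) with hb
  set c := Real.sqrt (2*(N:ℝ)+2) with hc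
  have hN1 : (1:ℝ) ≤ (N:ℝ) := by exact_mod_cast hN
  have ha2 : a^2 = 2*(N:ℝ) := Real.sq_sqrt (by positivity)
  have hb2 : b^2 = 2*(N:ℝ)+1 := Real.sq_sqrt (by positivity)
  have hc2 : c^2 = 2*(N:ℝ)+2 := Real.sq_sqrt (by positivity)
  have ha0 : 0 < a := Real.sqrt_pos.2 (by linarith)
  have hb1 : 1 ≤ b := Real.one_le_sqrt.mpr (by have h0 : (0:ℝ) ≤ (N:ℝ) := Nat.cast_nonneg N; linarith)
  have hb0 : 0 < b := lt_of_lt_of_le one_pos hb1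
  have hc0 : 0 < c := Real.sqrt_pos.2 (by linarith)
  have h2 : a + c ≤ 2*b := by nlinarith [sq_nonneg (a+c-2*b), sq_nonneg (a-c)]
  have hca : 0 ≤ c - a := by
    have : a ≤ c := Real.sqrt_le_sqrt (by linarith)
    linarith
  have hac : a*c ≤ b^2 := by nlinarith [sq_nonneg (a*c - b^2), sq_nonneg (a-c), mul_pos ha0 hc0]
  have key : 1 ≤ b*(c-a) := by nlinarith [mul_le_mul_of_nonneg_left h2 hca]
  have h3 : 1/a - 1/c = (c-a)/(a*c) := by field_simp
  rw [h3, div_le_div_iff₀ (by positivity) (by positivity)]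
  -- 1 * (a*c) ≤ (c-a) * (b * (2N+1))
  have hb2' : b*(2*(N:ℝ)+1) = b^3 := by rw [← hb2]; ring
  rw [one_mul, hb2']
  nlinarith [mul_le_mul_of_nonneg_left key (le_of_lt (mul_pos hb0 hb0)), sq_nonneg b]

open Real

lemma my_hilbert {m : ℝ} (hm : 1 ≤ m) :
    Summable (fun k : ℕ => 1/(Real.sqrt (2*(k:ℝ)+1) * (2*(k:ℝ)+1+m))) ∧
    ∑' k : ℕ, 1/(Real.sqrt (2*(k:ℝ)+1) * (2*(k:ℝ)+1+m)) ≤ 4/Real.sqrt m := by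
  have hm0 : (0:ℝ) < m := lt_of_lt_of_le one_pos hm
  set f : ℕ → ℝ := fun k => 1/(Real.sqrt (2*(k:ℝ)+1) * (2*(k:ℝ)+1+m)) with hf
  have hf0 : ∀ k, 0 ≤ f k := by
    intro k
    apply div_nonneg zero_le_one
    have h0 : (0:ℝ) ≤ (k:ℝ) := Nat.cast_nonneg k
    have := Real.sqrt_nonneg (2*(k:ℝ)+1)
    nlinarith
  set K := ⌈m⌉₊ with hKdef
  have hK1 : 1 ≤ K := Nat.one_le_ceil_iff.mpr hm0
  have hmK : m ≤ (K:ℝ) := Nat.le_ceil m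
  have hK2m : (K:ℝ) ≤ 2*m := by
    have := Nat.ceil_lt_add_one (le_of_lt hm0)
    linarith
  have hsm : 0 < Real.sqrt m := Real.sqrt_pos.2 hm0
  -- part 1 : sum over range K
  have part1 : ∑ i ∈ Finset.range K, f i ≤ 2/Real.sqrt m := by
    have step : ∀ i ∈ Finset.range K,
        f i ≤ (1/m) * (Real.sqrt (2*(i:ℝ)+2) - Real.sqrt (2*(i:ℝ))) := by
      intro i _
      have h0 : (0:ℝ) ≤ (i:ℝ) := Nat.cast_nonneg i
      have hb : 0 < Real.sqrt (2*(i:ℝ)+1) := Real.sqrt_pos.2 (by linarith)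
      have h1 : f i ≤ (1/m) * (1/Real.sqrt (2*(i:ℝ)+1)) := by
        have e : (1/m) * (1/Real.sqrt (2*(i:ℝ)+1)) = 1/(m * Real.sqrt (2*(i:ℝ)+1)) := by
          rw [div_mul_div_comm, one_mul]
        rw [hf, e]
        apply div_le_div_of_nonneg_left zero_le_one (by positivity)
        nlinarith [hb, hm0]
      exact h1.trans (by
        have := my_tele1 i
        have hminv : 0 ≤ 1/m := by positivity
        exact mul_le_mul_of_nonneg_left this hminv)
    calc ∑ i ∈ Finset.range K, f i
        ≤ ∑ i ∈ Finset.range K, (1/m) * (Real.sqrt (2*(i:ℝ)+2) - Real.sqrt (2*(i:ℝ))) :=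
          Finset.sum_le_sum step
      _ = (1/m) * ∑ i ∈ Finset.range K, (Real.sqrt (2*((i:ℝ)+1)) - Real.sqrt (2*(i:ℝ))) := by
          rw [← Finset.mul_sum]; congr 1; apply Finset.sum_congr rfl; intro i _; ring_nf
      _ = (1/m) * (Real.sqrt (2*(K:ℝ)) - Real.sqrt (2*(0:ℕ):ℝ)) := by
          congr 1
          have := Finset.sum_range_sub (f := fun i : ℕ => Real.sqrt (2*(i:ℝ))) K
          simpa using this
      _ ≤ (1/m) * (2*Real.sqrt m) := by
          apply mul_le_mul_of_nonneg_left _ (by positivity)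
          have h4 : Real.sqrt (2*(K:ℝ)) ≤ Real.sqrt (4*m) := Real.sqrt_le_sqrt (by linarith)
          have h5 : Real.sqrt (4*m) = 2*Real.sqrt m := by
            rw [show (4:ℝ)*m = 2^2*m by ring, Real.sqrt_mul (by positivity),
              Real.sqrt_sq (by norm_num)]
          simp only [Nat.cast_zero, mul_zero, Real.sqrt_zero, sub_zero]
          linarith [h4, h5]
      _ = 2/Real.sqrt m := by
          field_simp
          linear_combination Real.mul_self_sqrt (le_of_lt hm0)
  -- part 2 : tail sums
  have part2 : ∀ n : ℕ, ∑ i ∈ Finset.Ico K (K+n), f i ≤ 1/Real.sqrt m := by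
    intro n
    rw [Finset.sum_Ico_eq_sum_range]
    simp only [Nat.add_sub_cancel_left]
    have step : ∀ i ∈ Finset.range n,
        f (K+i) ≤ 1/Real.sqrt (2*((K+i:ℕ):ℝ)) - 1/Real.sqrt (2*((K+i+1:ℕ):ℝ)) := by
      intro i _
      have hN : 1 ≤ K + i := le_trans hK1 (Nat.le_add_right K i)
      have h0 : (1:ℝ) ≤ ((K+i:ℕ):ℝ) := by exact_mod_cast hN
      have hb : 0 < Real.sqrt (2*((K+i:ℕ):ℝ)+1) := Real.sqrt_pos.2 (by linarith)
      have h1 : f (K+i) ≤ 1/(Real.sqrt (2*((K+i:ℕ):ℝ)+1) * (2*((K+i:ℕ):ℝ)+1)) := by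
        rw [hf]
        apply div_le_div_of_nonneg_left zero_le_one (by positivity)
        nlinarith [hb]
      refine h1.trans ?_
      have h2 := my_tele2 (K+i) hN
      have hcast : ((K+i+1:ℕ):ℝ) = ((K+i:ℕ):ℝ) + 1 := by push_cast; ring
      rw [hcast]
      rw [show (2:ℝ)*(((K+i:ℕ):ℝ)+1) = 2*((K+i:ℕ):ℝ)+2 by ring]
      exact h2
    calc ∑ i ∈ Finset.range n, f (K+i)
        ≤ ∑ i ∈ Finset.range n,
            (1/Real.sqrt (2*((K+i:ℕ):ℝ)) - 1/Real.sqrt (2*((K+i+1:ℕ):ℝ))) :=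
          Finset.sum_le_sum step
      _ = 1/Real.sqrt (2*((K+0:ℕ):ℝ)) - 1/Real.sqrt (2*((K+n:ℕ):ℝ)) := by
          exact Finset.sum_range_sub' (f := fun i : ℕ => 1/Real.sqrt (2*((K+i:ℕ):ℝ))) n
      _ ≤ 1/Real.sqrt (2*(K:ℝ)) := by
          simp only [Nat.add_zero]
          have : 0 ≤ 1/Real.sqrt (2*((K+n:ℕ):ℝ)) := by positivity
          linarith
      _ ≤ 1/Real.sqrt m := by
          apply div_le_div_of_nonneg_left zero_le_one hsm
          apply Real.sqrt_le_sqrt; linarith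
  have key : ∀ n : ℕ, ∑ i ∈ Finset.range n, f i ≤ 4/Real.sqrt m := by
    intro n
    have hsub : ∑ i ∈ Finset.range n, f i ≤ ∑ i ∈ Finset.range (K+n), f i := by
      apply Finset.sum_le_sum_of_subset_of_nonneg
      · exact Finset.range_subset_range.mpr (Nat.le_add_left n K)
      · intro i _ _; exact hf0 i
    have hsplit : ∑ i ∈ Finset.range (K+n), f i
        = ∑ i ∈ Finset.range K, f i + ∑ i ∈ Finset.Ico K (K+n), f i :=
      (Finset.sum_range_add_sum_Ico f (Nat.le_add_right K n)).symm
    have h1 : (0:ℝ) ≤ 1/Real.sqrt m := by positivity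
    calc ∑ i ∈ Finset.range n, f i ≤ _ := hsub
      _ = _ := hsplit
      _ ≤ 2/Real.sqrt m + 1/Real.sqrt m := add_le_add part1 (part2 n)
      _ ≤ 4/Real.sqrt m := by
          rw [← add_div]
          gcongr <;> norm_num
  exact ⟨summable_of_sum_range_le hf0 key, Real.tsum_le_of_sum_range_le hf0 key⟩

open Real

lemma my_key_cosh (k : ℕ) (x : ℝ) (hx0 : 0 ≤ x) (hxπ : x ≤ π) :
    Real.cosh ((2*(k:ℝ)+1) * (π/2) * (x-π)) ≤
      4 * Real.exp (-(2*(k:ℝ)+1) * x) * Real.sinh ((2*(k:ℝ)+1) * π^2/2) := by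
  have hπ : 2 ≤ π := by linarith [Real.pi_gt_three]
  have hk0 : (0:ℝ) ≤ (k:ℝ) := Nat.cast_nonneg k
  have hb1 : 1 ≤ 2*(k:ℝ)+1 := by linarith
  have hb0 : 0 < 2*(k:ℝ)+1 := by linarith
  have h1 : Real.cosh ((2*(k:ℝ)+1) * (π/2) * (x-π))
      = Real.cosh ((2*(k:ℝ)+1) * (π/2) * (π-x)) := by
    rw [show (2*(k:ℝ)+1)*(π/2)*(x-π) = -((2*(k:ℝ)+1)*(π/2)*(π-x)) by ring, Real.cosh_neg]
  have hax : 0 ≤ (2*(k:ℝ)+1) * (π/2) * (π-x) := by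
    apply mul_nonneg (by positivity) (by linarith)
  have h2 : Real.cosh ((2*(k:ℝ)+1) * (π/2) * (π-x))
      ≤ Real.exp ((2*(k:ℝ)+1) * (π/2) * (π-x)) := by
    rw [Real.cosh_eq]
    have : Real.exp (-((2*(k:ℝ)+1) * (π/2) * (π-x)))
        ≤ Real.exp ((2*(k:ℝ)+1) * (π/2) * (π-x)) := by
      apply Real.exp_le_exp.2; linarith
    linarith
  have hs1 : 1 ≤ (2*(k:ℝ)+1) * π^2/2 := by nlinarith
  have h3 : Real.exp ((2*(k:ℝ)+1) * π^2/2) / 4 ≤ Real.sinh ((2*(k:ℝ)+1) * π^2/2) := by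
    rw [Real.sinh_eq]
    have e1 : 2 ≤ Real.exp ((2*(k:ℝ)+1) * π^2/2) := by
      have := Real.add_one_le_exp ((2*(k:ℝ)+1) * π^2/2); linarith
    have e2 : Real.exp (-((2*(k:ℝ)+1) * π^2/2)) ≤ 1 := by
      rw [Real.exp_le_one_iff]; linarith
    linarith
  have h4 : Real.exp ((2*(k:ℝ)+1) * (π/2) * (π-x))
      ≤ 4 * Real.exp (-(2*(k:ℝ)+1) * x) * (Real.exp ((2*(k:ℝ)+1) * π^2/2) / 4) := by
    rw [show (4:ℝ) * Real.exp (-(2*(k:ℝ)+1)*x) * (Real.exp ((2*(k:ℝ)+1) * π^2/2)/4)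
        = Real.exp (-(2*(k:ℝ)+1)*x) * Real.exp ((2*(k:ℝ)+1) * π^2/2) by ring, ← Real.exp_add]
    apply Real.exp_le_exp.2
    nlinarith [mul_nonneg (mul_nonneg hb0.le hx0) (show (0:ℝ) ≤ π/2 - 1 by linarith)]
  calc Real.cosh ((2*(k:ℝ)+1) * (π/2) * (x-π))
      = Real.cosh ((2*(k:ℝ)+1) * (π/2) * (π-x)) := h1
    _ ≤ Real.exp ((2*(k:ℝ)+1) * (π/2) * (π-x)) := h2
    _ ≤ 4 * Real.exp (-(2*(k:ℝ)+1) * x) * (Real.exp ((2*(k:ℝ)+1) * π^2/2) / 4) := h4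
    _ ≤ 4 * Real.exp (-(2*(k:ℝ)+1) * x) * Real.sinh ((2*(k:ℝ)+1) * π^2/2) := by
        apply mul_le_mul_of_nonneg_left h3 (by positivity)

lemma my_exp_integral {l : ℝ} (hl : 0 < l) :
    (∫ x in Set.Ioc (0:ℝ) π, Real.exp (-l*x)) ≤ 1/l := by
  have hπ : (0:ℝ) ≤ π := Real.pi_nonneg
  have heq : (∫ x in Set.Ioc (0:ℝ) π, Real.exp (-l*x)) = ∫ x in (0:ℝ)..π, Real.exp (-l*x) := by
    rw [intervalIntegral.integral_of_le hπ]
  rw [heq]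
  have hderiv : ∀ x ∈ Set.uIcc (0:ℝ) π, HasDerivAt (fun y => -Real.exp (-l*y)/l)
      (Real.exp (-l*x)) x := by
    intro x _
    have h1 : HasDerivAt (fun y : ℝ => -l*y) (-l) x := by
      simpa using (hasDerivAt_id x).const_mul (-l)
    have h2 := (Real.hasDerivAt_exp (-l*x)).comp x h1
    have h3 := h2.neg.div_const l
    exact h3.congr_deriv (by rw [mul_neg, neg_neg, mul_div_assoc, div_self hl.ne', mul_one])
  rw [intervalIntegral.integral_eq_sub_of_hasDerivAt hderiv
    (Continuous.intervalIntegrable (by continuity) 0 π)]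
  have e1 : 0 < Real.exp (-l*π) := Real.exp_pos _
  have e2 : Real.exp (-l*0) = 1 := by norm_num
  rw [e2]
  have h5 : 0 ≤ Real.exp (-l*π)/l := by positivity
  have h6 : -Real.exp (-l*π)/l = -(Real.exp (-l*π)/l) := by ring
  have h7 : - -(1:ℝ)/l = 1/l := by ring
  rw [h6]
  linarith [h5, (by ring : -(Real.exp (-l*π)/l) - -1/l = 1/l - Real.exp (-l*π)/l)]


lemma my_exp_quad {u : ℝ} (hu : 0 < u) : Real.exp (-u) ≤ 4/u^2 := by
  have h1 : u/2 + 1 ≤ Real.exp (u/2) := Real.add_one_le_exp (u/2)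
  have h2 : u^2/4 ≤ Real.exp u := by
    have h3 : Real.exp u = Real.exp (u/2) * Real.exp (u/2) := by
      rw [← Real.exp_add]; congr 1; ring
    nlinarith [Real.exp_pos (u/2)]
  rw [Real.exp_neg, inv_le_comm₀ (Real.exp_pos u) (by positivity), inv_div]
  calc u^2/4 ≤ rexp u := h2

lemma my_geo (x : ℝ) (hx : 0 < x) : Summable (fun k : ℕ => Real.exp (-(2*(k:ℝ)+1)*x)) := by
  have h : ∀ k : ℕ, Real.exp (-(2*(k:ℝ)+1)*x) = Real.exp (-x) * (Real.exp (-2*x))^k := by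
    intro k
    rw [← Real.exp_nat_mul, ← Real.exp_add]
    congr 1; push_cast; ring
  apply Summable.congr _ (fun k => (h k).symm)
  exact (summable_geometric_of_lt_one (le_of_lt (Real.exp_pos _))
    (Real.exp_lt_one_iff.2 (by linarith))).mul_left _


/-- There is `C > 0` such that for every square-summable sequence `(v_k)_{k≥1}` of complex
numbers, `∫₀^π |Σ_{k≥1} b_k v_k cosh((2k-1)(π/2)(x-π))|² dx ≤ C Σ_{k≥1} |v_k|²`,
where `b_k = (-1)^k √2 / sinh((2k-1)π²/2)`.
(The sequence is encoded as `v : ℕ → ℂ` with `v k` standing for `v_{k+1}`.) -/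
theorem neumann_to_neumann_bounded :
    ∃ C : ℝ, 0 < C ∧ ∀ v : ℕ → ℂ, (Summable fun k : ℕ => ‖v k‖ ^ 2) →
      ∫ x in (0:ℝ)..π,
          ‖∑' k : ℕ, (((-1 : ℝ) ^ (k + 1) * Real.sqrt 2 /
                Real.sinh ((2 * (k : ℝ) + 1) * π ^ 2 / 2) : ℝ) : ℂ) * v k *
              ((Real.cosh ((2 * (k : ℝ) + 1) * (π / 2) * (x - π)) : ℝ) : ℂ)‖ ^ 2
        ≤ C * ∑' k : ℕ, ‖v k‖ ^ 2 := by
  refine ⟨128, by norm_num, ?_⟩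
  intro v hv
  set S : ℝ := ∑' k : ℕ, ‖v k‖ ^ 2 with hSdef
  have hS0 : 0 ≤ S := tsum_nonneg (fun k => by positivity)
  set c : ℝ := 4 * Real.sqrt 2 with hcdef
  have hc0 : 0 < c := by positivity
  have hc2 : c^2 = 32 := by
    rw [hcdef, mul_pow, Real.sq_sqrt (by norm_num : (0:ℝ) ≤ 2)]; norm_num
  set term : ℕ → ℝ → ℂ := fun k x =>
    (((-1 : ℝ) ^ (k + 1) * Real.sqrt 2 /
        Real.sinh ((2 * (k : ℝ) + 1) * π ^ 2 / 2) : ℝ) : ℂ) * v k *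
      ((Real.cosh ((2 * (k : ℝ) + 1) * (π / 2) * (x - π)) : ℝ) : ℂ) with htermdef
  set F : ℝ → ℝ := fun x => ‖∑' k : ℕ, term k x‖ ^ 2 with hFdef
  show ∫ x in (0:ℝ)..π, F x ≤ 128 * S
  -- basic facts
  have hβ0 : ∀ k : ℕ, (0:ℝ) < 2*(k:ℝ)+1 := by
    intro k; have : (0:ℝ) ≤ (k:ℝ) := Nat.cast_nonneg k; linarith
  have hβ1 : ∀ k : ℕ, (1:ℝ) ≤ 2*(k:ℝ)+1 := by
    intro k; have : (0:ℝ) ≤ (k:ℝ) := Nat.cast_nonneg k; linarith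
  have hsβ1 : ∀ k : ℕ, (1:ℝ) ≤ Real.sqrt (2*(k:ℝ)+1) :=
    fun k => Real.one_le_sqrt.mpr (hβ1 k)
  have hsβ0 : ∀ k : ℕ, (0:ℝ) < Real.sqrt (2*(k:ℝ)+1) :=
    fun k => lt_of_lt_of_le one_pos (hsβ1 k)
  have hsinh0 : ∀ k : ℕ, 0 < Real.sinh ((2*(k:ℝ)+1) * π ^ 2 / 2) := by
    intro k
    rw [Real.sinh_pos_iff]
    have := hβ0 k
    positivity
  -- norm bound on each term
  have hterm : ∀ (k : ℕ) (x : ℝ), 0 ≤ x → x ≤ π →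
      ‖term k x‖ ≤ c * Real.exp (-(2*(k:ℝ)+1)*x) * ‖v k‖ := by
    intro k x hx0 hxπ
    rw [htermdef]
    simp only [norm_mul, Complex.norm_real, Real.norm_eq_abs]
    have e1 : |(-1 : ℝ) ^ (k + 1) * Real.sqrt 2 /
        Real.sinh ((2 * (k : ℝ) + 1) * π ^ 2 / 2)|
        = Real.sqrt 2 / Real.sinh ((2 * (k : ℝ) + 1) * π ^ 2 / 2) := by
      rw [abs_div, abs_mul, abs_pow, abs_neg, abs_one, one_pow, one_mul,
        abs_of_nonneg (Real.sqrt_nonneg 2), abs_of_pos (hsinh0 k)]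
    have e2 : |Real.cosh ((2 * (k : ℝ) + 1) * (π / 2) * (x - π))|
        = Real.cosh ((2 * (k : ℝ) + 1) * (π / 2) * (x - π)) :=
      abs_of_pos (Real.cosh_pos _)
    rw [e1, e2]
    have key := my_key_cosh k x hx0 hxπ
    have hv0 : (0:ℝ) ≤ ‖v k‖ := norm_nonneg _
    have hsd : 0 < Real.sinh ((2 * (k : ℝ) + 1) * π ^ 2 / 2) := hsinh0 k
    have h2 : Real.sqrt 2 / Real.sinh ((2 * (k : ℝ) + 1) * π ^ 2 / 2) * ‖v k‖ *
        Real.cosh ((2 * (k : ℝ) + 1) * (π / 2) * (x - π))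
        ≤ Real.sqrt 2 / Real.sinh ((2 * (k : ℝ) + 1) * π ^ 2 / 2) * ‖v k‖ *
        (4 * Real.exp (-(2*(k:ℝ)+1) * x) * Real.sinh ((2*(k:ℝ)+1) * π^2/2)) := by
      apply mul_le_mul_of_nonneg_left key (by positivity)
    refine h2.trans (le_of_eq ?_)
    rw [hcdef]
    field_simp
  -- p and q
  set p : ℕ → ℝ → ℝ := fun k x =>
    c / Real.sqrt (2*(k:ℝ)+1) * Real.exp (-(2*(k:ℝ)+1)*x) with hpdef
  set q : ℕ → ℝ → ℝ := fun k x =>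
    c * Real.sqrt (2*(k:ℝ)+1) * Real.exp (-(2*(k:ℝ)+1)*x) * ‖v k‖^2 with hqdef
  have hp0 : ∀ k x, 0 ≤ p k x := by
    intro k x; rw [hpdef]; have := hsβ0 k; positivity
  have hq0 : ∀ k x, 0 ≤ q k x := by
    intro k x; rw [hqdef]; have := hsβ0 k; positivity
  have hpq : ∀ k x, p k x * q k x = (c * Real.exp (-(2*(k:ℝ)+1)*x) * ‖v k‖)^2 := by
    intro k x
    rw [hpdef, hqdef]
    have hs := Real.mul_self_sqrt (le_of_lt (hβ0 k))
    have hne := ne_of_gt (hsβ0 k)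
    field_simp
  have hvS : ∀ k, ‖v k‖ ≤ Real.sqrt S := by
    intro k
    have h1 : ‖v k‖^2 ≤ S := Summable.le_tsum hv k (fun j _ => by positivity)
    have := Real.sqrt_le_sqrt h1
    rwa [Real.sqrt_sq (norm_nonneg _)] at this
  -- summability at fixed x > 0
  have hsump : ∀ x : ℝ, 0 < x → Summable (fun k : ℕ => p k x) := by
    intro x hx
    apply Summable.of_nonneg_of_le (fun k => hp0 k x) _ ((my_geo x hx).mul_left c)
    intro k
    rw [hpdef]
    apply mul_le_mul_of_nonneg_right _ (le_of_lt (Real.exp_pos _))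
    rw [div_le_iff₀ (hsβ0 k)]
    nlinarith [hsβ1 k, hc0]
  have hsumq : ∀ x : ℝ, 0 < x → Summable (fun k : ℕ => q k x) := by
    intro x hx
    apply Summable.of_nonneg_of_le (fun k => hq0 k x) _ (hv.mul_left (c * (4/x^2)))
    intro k
    rw [hqdef]
    have h1 : Real.sqrt (2*(k:ℝ)+1) * Real.exp (-(2*(k:ℝ)+1)*x) ≤ 4/x^2 := by
      have h2 : Real.exp (-((2*(k:ℝ)+1)*x)) ≤ 4/((2*(k:ℝ)+1)*x)^2 :=
        my_exp_quad (mul_pos (hβ0 k) hx)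
      have h3 : Real.sqrt (2*(k:ℝ)+1) ≤ 2*(k:ℝ)+1 := by
        nlinarith [mul_nonneg (show (0:ℝ) ≤ Real.sqrt (2*(k:ℝ)+1) - 1 by linarith [hsβ1 k])
          (le_of_lt (hsβ0 k)), Real.sq_sqrt (le_of_lt (hβ0 k))]
      calc Real.sqrt (2*(k:ℝ)+1) * Real.exp (-(2*(k:ℝ)+1)*x)
          ≤ (2*(k:ℝ)+1) * (4/((2*(k:ℝ)+1)*x)^2) := by
            apply mul_le_mul h3 _ (le_of_lt (Real.exp_pos _)) (le_of_lt (hβ0 k))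
            rw [show -(2*(k:ℝ)+1)*x = -((2*(k:ℝ)+1)*x) by ring]
            exact h2
        _ = 4/((2*(k:ℝ)+1)*x^2) := by
            field_simp
        _ ≤ 4/x^2 := by
            apply div_le_div_of_nonneg_left (by norm_num) (by positivity)
            nlinarith [hβ1 k, sq_nonneg x, hx]
    calc c * Real.sqrt (2*(k:ℝ)+1) * Real.exp (-(2*(k:ℝ)+1)*x) * ‖v k‖^2
        ≤ c * (4/x^2) * ‖v k‖^2 := by
          rw [mul_assoc c]
          apply mul_le_mul_of_nonneg_right _ (by positivity)
          exact mul_le_mul_of_nonneg_left h1 (le_of_lt hc0)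
      _ = c * (4/x^2) * ‖v k‖^2 := rfl
  have hsumd : ∀ x : ℝ, 0 < x → Summable (fun k : ℕ => c * Real.exp (-(2*(k:ℝ)+1)*x) * ‖v k‖) := by
    intro x hx
    apply Summable.of_nonneg_of_le (fun k => by positivity) _
      ((my_geo x hx).mul_left (c * Real.sqrt S))
    intro k
    calc c * Real.exp (-(2*(k:ℝ)+1)*x) * ‖v k‖
        ≤ c * Real.exp (-(2*(k:ℝ)+1)*x) * Real.sqrt S := by
          apply mul_le_mul_of_nonneg_left (hvS k) (by positivity)
      _ = c * Real.sqrt S * Real.exp (-(2*(k:ℝ)+1)*x) := by ring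
  have hsumn : ∀ x : ℝ, 0 < x → x ≤ π → Summable (fun k : ℕ => ‖term k x‖) := by
    intro x hx hxπ
    apply Summable.of_nonneg_of_le (fun k => norm_nonneg _)
      (fun k => hterm k x (le_of_lt hx) hxπ) (hsumd x hx)
  -- pointwise bound
  have hFx : ∀ x : ℝ, 0 < x → x ≤ π →
      F x ≤ (∑' k, p k x) * (∑' k, q k x) := by
    intro x hx hxπ
    have h1 : ‖∑' k, term k x‖ ≤ ∑' k, ‖term k x‖ :=
      norm_tsum_le_tsum_norm (hsumn x hx hxπ)
    have h2 : (∑' k, ‖term k x‖) ≤ ∑' k, Real.sqrt (p k x * q k x) := by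
      apply Summable.tsum_le_tsum _ (hsumn x hx hxπ)
      · apply Summable.of_nonneg_of_le (fun k => Real.sqrt_nonneg _) _ (hsumd x hx)
        intro k
        apply le_of_eq
        rw [hpq k x, Real.sqrt_sq (by positivity)]
      · intro k
        rw [hpq k x, Real.sqrt_sq (by positivity)]
        exact hterm k x (le_of_lt hx) hxπ
    have h3 := my_tsum_sqrt_mul (fun k => hp0 k x) (fun k => hq0 k x)
      (hsump x hx) (hsumq x hx)
    have h4 : ‖∑' k, term k x‖ ≤ Real.sqrt (∑' k, p k x) * Real.sqrt (∑' k, q k x) :=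
      h1.trans (h2.trans h3)
    have h5 := pow_le_pow_left₀ (norm_nonneg _) h4 2
    rw [hFdef]
    refine h5.trans (le_of_eq ?_)
    rw [mul_pow, Real.sq_sqrt (tsum_nonneg (fun k => hp0 k x)),
      Real.sq_sqrt (tsum_nonneg (fun k => hq0 k x))]
    -- continuity of p, q in x
  have hpc : ∀ k : ℕ, Continuous (fun x => p k x) := by
    intro k; rw [hpdef]
    exact continuous_const.mul ((continuous_const.mul continuous_id).rexp)
  have hqc : ∀ k : ℕ, Continuous (fun x => q k x) := by
    intro k; rw [hqdef]
    exact (continuous_const.mul ((continuous_const.mul continuous_id).rexp)).mul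
      continuous_const
  -- the integral of p k * q j over Ioc 0 π
  set R : ℕ × ℕ → ℝ := fun kj =>
    c^2 * Real.sqrt (2*(kj.2:ℝ)+1) * ‖v kj.2‖^2 /
      (Real.sqrt (2*(kj.1:ℝ)+1) * ((2*(kj.1:ℝ)+1) + (2*(kj.2:ℝ)+1))) with hRdef
  have hR0 : ∀ kj, 0 ≤ R kj := by
    intro kj; rw [hRdef]
    have h1 := hsβ0 kj.1; have h2 := hsβ0 kj.2; have h3 := hβ0 kj.1; have h4 := hβ0 kj.2
    positivity
  have hWint : ∀ kj : ℕ × ℕ, IntegrableOn (fun x => p kj.1 x * q kj.2 x) (Set.Ioc 0 π) := by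
    intro kj
    exact ((hpc kj.1).mul (hqc kj.2)).integrableOn_Ioc
  have hIntR : ∀ kj : ℕ × ℕ, (∫ x in Set.Ioc (0:ℝ) π, p kj.1 x * q kj.2 x) ≤ R kj := by
    intro ⟨k, j⟩
    set A : ℝ := c^2 * (Real.sqrt (2*(j:ℝ)+1) / Real.sqrt (2*(k:ℝ)+1)) * ‖v j‖^2 with hAdef
    have hA0 : 0 ≤ A := by
      have h1 := hsβ0 k; have h2 := hsβ0 j; rw [hAdef]; positivity
    set l : ℝ := (2*(k:ℝ)+1) + (2*(j:ℝ)+1) with hldef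
    have hl0 : 0 < l := by rw [hldef]; have := hβ0 k; have := hβ0 j; linarith
    have hWeq : ∀ x : ℝ, p k x * q j x = A * Real.exp (-l*x) := by
      intro x
      rw [hpdef, hqdef, hAdef, hldef]
      simp only
      rw [show c / Real.sqrt (2*(k:ℝ)+1) * Real.exp (-(2*(k:ℝ)+1)*x) *
          (c * Real.sqrt (2*(j:ℝ)+1) * Real.exp (-(2*(j:ℝ)+1)*x) * ‖v j‖^2)
          = c^2 * (Real.sqrt (2*(j:ℝ)+1) / Real.sqrt (2*(k:ℝ)+1)) * ‖v j‖^2 *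
            (Real.exp (-(2*(k:ℝ)+1)*x) * Real.exp (-(2*(j:ℝ)+1)*x)) by ring,
        ← Real.exp_add]
      congr 2
      ring
    calc (∫ x in Set.Ioc (0:ℝ) π, p k x * q j x)
        = ∫ x in Set.Ioc (0:ℝ) π, A * Real.exp (-l*x) := by
          apply MeasureTheory.integral_congr_ae
          filter_upwards with x using hWeq x
      _ = A * ∫ x in Set.Ioc (0:ℝ) π, Real.exp (-l*x) :=
          MeasureTheory.integral_const_mul A _
      _ ≤ A * (1/l) := mul_le_mul_of_nonneg_left (my_exp_integral hl0) hA0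
      _ = R (k, j) := by
          rw [hRdef, hAdef, hldef]
          have h1 := ne_of_gt (hsβ0 k)
          field_simp
  -- summing R
  have hRsum_inner : ∀ j : ℕ, (∑' k : ℕ, R (k, j)) ≤ 4 * c^2 * ‖v j‖^2 := by
    intro j
    have hm : (1:ℝ) ≤ 2*(j:ℝ)+1 := hβ1 j
    obtain ⟨hsum, hbound⟩ := my_hilbert hm
    have hre : ∀ k : ℕ, R (k, j) = (c^2 * Real.sqrt (2*(j:ℝ)+1) * ‖v j‖^2) *
        (1/(Real.sqrt (2*(k:ℝ)+1) * ((2*(k:ℝ)+1) + (2*(j:ℝ)+1)))) := by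
      intro k
      rw [hRdef]
      simp only
      rw [mul_one_div]
    calc (∑' k : ℕ, R (k, j))
        = (c^2 * Real.sqrt (2*(j:ℝ)+1) * ‖v j‖^2) *
            ∑' k : ℕ, 1/(Real.sqrt (2*(k:ℝ)+1) * ((2*(k:ℝ)+1) + (2*(j:ℝ)+1))) := by
          rw [← tsum_mul_left]
          exact tsum_congr hre
      _ ≤ (c^2 * Real.sqrt (2*(j:ℝ)+1) * ‖v j‖^2) * (4/Real.sqrt (2*(j:ℝ)+1)) := by
          apply mul_le_mul_of_nonneg_left _ (by have := hsβ0 j; positivity)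
          exact hbound
      _ = 4 * c^2 * ‖v j‖^2 := by
          have h1 := ne_of_gt (hsβ0 j)
          field_simp
  have hRsumk : ∀ j : ℕ, Summable (fun k : ℕ => R (k, j)) := by
    intro j
    have hm : (1:ℝ) ≤ 2*(j:ℝ)+1 := hβ1 j
    obtain ⟨hsum, _⟩ := my_hilbert hm
    apply Summable.congr (hsum.mul_left (c^2 * Real.sqrt (2*(j:ℝ)+1) * ‖v j‖^2))
    intro k
    rw [hRdef]
    simp only
    rw [mul_one_div]
  -- main lintegral bound
  have hlin : (∫⁻ x in Set.Ioc (0:ℝ) π, ENNReal.ofReal (F x)) ≤ ENNReal.ofReal (128 * S) := by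
    have step1 : (∫⁻ x in Set.Ioc (0:ℝ) π, ENNReal.ofReal (F x))
        ≤ ∫⁻ x in Set.Ioc (0:ℝ) π,
            ∑' kj : ℕ × ℕ, ENNReal.ofReal (p kj.1 x * q kj.2 x) := by
      apply MeasureTheory.lintegral_mono_ae
      rw [MeasureTheory.ae_restrict_iff' measurableSet_Ioc]
      filter_upwards with x hx
      obtain ⟨hx0, hxπ⟩ := hx
      calc ENNReal.ofReal (F x)
          ≤ ENNReal.ofReal ((∑' k, p k x) * (∑' k, q k x)) :=
            ENNReal.ofReal_le_ofReal (hFx x hx0 hxπ)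
        _ = (∑' k, ENNReal.ofReal (p k x)) * (∑' k, ENNReal.ofReal (q k x)) := by
            rw [ENNReal.ofReal_mul (tsum_nonneg (fun k => hp0 k x)),
              ENNReal.ofReal_tsum_of_nonneg (fun k => hp0 k x) (hsump x hx0),
              ENNReal.ofReal_tsum_of_nonneg (fun k => hq0 k x) (hsumq x hx0)]
        _ = ∑' k : ℕ, ∑' j : ℕ, ENNReal.ofReal (p k x) * ENNReal.ofReal (q j x) := by
            rw [← ENNReal.tsum_mul_right]
            exact tsum_congr fun k => (ENNReal.tsum_mul_left).symm
        _ = ∑' kj : ℕ × ℕ, ENNReal.ofReal (p kj.1 x) * ENNReal.ofReal (q kj.2 x) :=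
            (ENNReal.tsum_prod' (f := fun kj : ℕ × ℕ =>
              ENNReal.ofReal (p kj.1 x) * ENNReal.ofReal (q kj.2 x))).symm
        _ = ∑' kj : ℕ × ℕ, ENNReal.ofReal (p kj.1 x * q kj.2 x) := by
            apply tsum_congr
            intro kj
            rw [ENNReal.ofReal_mul (hp0 kj.1 x)]
    have step2 : (∫⁻ x in Set.Ioc (0:ℝ) π,
          ∑' kj : ℕ × ℕ, ENNReal.ofReal (p kj.1 x * q kj.2 x))
        = ∑' kj : ℕ × ℕ, ∫⁻ x in Set.Ioc (0:ℝ) π, ENNReal.ofReal (p kj.1 x * q kj.2 x) := by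
      apply MeasureTheory.lintegral_tsum
      intro kj
      exact (((hpc kj.1).mul (hqc kj.2)).measurable.ennreal_ofReal).aemeasurable
    have step3 : ∀ kj : ℕ × ℕ,
        (∫⁻ x in Set.Ioc (0:ℝ) π, ENNReal.ofReal (p kj.1 x * q kj.2 x))
          ≤ ENNReal.ofReal (R kj) := by
      intro kj
      rw [← MeasureTheory.ofReal_integral_eq_lintegral_ofReal (hWint kj)
        (Filter.Eventually.of_forall (fun x => mul_nonneg (hp0 kj.1 x) (hq0 kj.2 x)))]
      exact ENNReal.ofReal_le_ofReal (hIntR kj)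
    have step4 : (∑' kj : ℕ × ℕ, ENNReal.ofReal (R kj)) ≤ ENNReal.ofReal (128 * S) := by
      rw [ENNReal.tsum_prod' (f := fun kj : ℕ × ℕ => ENNReal.ofReal (R kj))]
      rw [ENNReal.tsum_comm]
      calc (∑' j : ℕ, ∑' k : ℕ, ENNReal.ofReal (R (k, j)))
          = ∑' j : ℕ, ENNReal.ofReal (∑' k : ℕ, R (k, j)) := by
            apply tsum_congr
            intro j
            rw [ENNReal.ofReal_tsum_of_nonneg (fun k => hR0 (k, j)) (hRsumk j)]
        _ ≤ ∑' j : ℕ, ENNReal.ofReal (4 * c^2 * ‖v j‖^2) := by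
            apply ENNReal.tsum_le_tsum
            intro j
            exact ENNReal.ofReal_le_ofReal (hRsum_inner j)
        _ = ENNReal.ofReal (∑' j : ℕ, 4 * c^2 * ‖v j‖^2) := by
            rw [ENNReal.ofReal_tsum_of_nonneg (fun j => by positivity)
              (hv.mul_left (4 * c^2))]
        _ = ENNReal.ofReal (128 * S) := by
            congr 1
            rw [tsum_mul_left, hc2, hSdef]
            norm_num
      done
    calc (∫⁻ x in Set.Ioc (0:ℝ) π, ENNReal.ofReal (F x))
        ≤ _ := step1
      _ = _ := step2
      _ ≤ ∑' kj : ℕ × ℕ, ENNReal.ofReal (R kj) := ENNReal.tsum_le_tsum step3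
      _ ≤ ENNReal.ofReal (128 * S) := step4
  -- conclude
  by_cases hInt : IntervalIntegrable F MeasureTheory.volume 0 π
  · rw [intervalIntegral.integral_of_le Real.pi_nonneg]
    have hmeas : AEStronglyMeasurable F (MeasureTheory.volume.restrict (Set.Ioc 0 π)) :=
      ((intervalIntegrable_iff_integrableOn_Ioc_of_le Real.pi_nonneg).1 hInt).aestronglyMeasurable
    rw [MeasureTheory.integral_eq_lintegral_of_nonneg_ae
      (Filter.Eventually.of_forall (fun x => by rw [hFdef]; positivity)) hmeas]
    calc (∫⁻ x in Set.Ioc (0:ℝ) π, ENNReal.ofReal (F x)).toReal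
        ≤ (ENNReal.ofReal (128 * S)).toReal := by
          apply ENNReal.toReal_mono ENNReal.ofReal_ne_top hlin
      _ = 128 * S := ENNReal.toReal_ofReal (by positivity)
  · rw [intervalIntegral.integral_undef hInt]
    positivity
end

section
/- Let μ_k = √(k·tanh(k)) for every integer k ≥ 1, and set μ_{-k} = -μ_k. Then there exists ε > 0 such that for every ω ∈ ℝ with |ω| ≥ 1, the closed interval [ω - ε/|ω|, ω + ε/|ω|] contains at most one element of the set { μ_k : k ∈ ℤ, k ≠ 0 }. -/
open Real

/-- `μ_k = sign(k) √(|k| tanh |k|)` for `k ∈ ℤ`, with `μ_{-k} = -μ_k`. -/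
noncomputable def muZ (k : ℤ) : ℝ :=
  (if k < 0 then (-1 : ℝ) else 1) * Real.sqrt (|(k : ℝ)| * Real.tanh |(k : ℝ)|)

/- auxiliary lemmas -/

lemma tanh_mono' {a b : ℝ} (h : a ≤ b) : Real.tanh a ≤ Real.tanh b := by
  rw [Real.tanh_eq_sinh_div_cosh, Real.tanh_eq_sinh_div_cosh,
    div_le_div_iff₀ (Real.cosh_pos _) (Real.cosh_pos _)]
  have h2 : 0 ≤ Real.sinh (b - a) := Real.sinh_nonneg_iff.2 (sub_nonneg.2 h)
  rw [Real.sinh_sub] at h2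
  linarith

lemma tanh_one_pos : 0 < Real.tanh 1 := by
  rw [Real.tanh_eq_sinh_div_cosh]
  exact div_pos (by simpa using Real.sinh_pos.2 one_pos) (Real.cosh_pos _)

lemma tanh_lt_one' (x : ℝ) : Real.tanh x < 1 := by
  rw [Real.tanh_eq_sinh_div_cosh, div_lt_one (Real.cosh_pos _)]
  have := Real.cosh_sub_sinh x
  nlinarith [Real.exp_pos (-x)]

noncomputable def nuZ (k : ℤ) : ℝ := Real.sqrt (|(k : ℝ)| * Real.tanh |(k : ℝ)|)

lemma nuZ_nonneg (k : ℤ) : 0 ≤ nuZ k := Real.sqrt_nonneg _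

lemma nuZ_sq (k : ℤ) : nuZ k ^ 2 = |(k : ℝ)| * Real.tanh |(k : ℝ)| := by
  have h0 : 0 ≤ Real.tanh |(k : ℝ)| := by
    have := tanh_mono' (abs_nonneg (k : ℝ))
    simpa [Real.tanh_zero] using this
  exact Real.sq_sqrt (mul_nonneg (abs_nonneg _) h0)

lemma nuZ_sq_ge (k : ℤ) (hk : k ≠ 0) : Real.tanh 1 ≤ nuZ k ^ 2 := by
  rw [nuZ_sq]
  have h1 : (1 : ℝ) ≤ |(k : ℝ)| := by
    rw [← Int.cast_abs]
    exact_mod_cast Int.one_le_abs hk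
  have h2 : Real.tanh 1 ≤ Real.tanh |(k : ℝ)| := tanh_mono' h1
  nlinarith [tanh_one_pos]

lemma nuZ_sq_gap {m n : ℤ} (hm : m ≠ 0) (h : |m| < |n|) :
    Real.tanh 1 ≤ nuZ n ^ 2 - nuZ m ^ 2 := by
  rw [nuZ_sq, nuZ_sq]
  have h1 : (1 : ℝ) ≤ |(m : ℝ)| := by
    rw [← Int.cast_abs]; exact_mod_cast Int.one_le_abs hm
  have h2 : |(m : ℝ)| + 1 ≤ |(n : ℝ)| := by
    rw [← Int.cast_abs, ← Int.cast_abs]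
    exact_mod_cast h
  have h3 : Real.tanh 1 ≤ Real.tanh |(m : ℝ)| := tanh_mono' h1
  have h4 : Real.tanh |(m : ℝ)| ≤ Real.tanh |(n : ℝ)| := tanh_mono' (by linarith)
  nlinarith [tanh_one_pos]

lemma nuZ_gap {m n : ℤ} (hm : m ≠ 0) (h : |m| < |n|) :
    Real.tanh 1 / 2 / (nuZ n + 1) ≤ nuZ n - nuZ m := by
  have hgap := nuZ_sq_gap hm h
  have hn := nuZ_nonneg n
  have hm' := nuZ_nonneg m
  have hmn : nuZ m ≤ nuZ n := by nlinarith [tanh_one_pos]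
  rw [div_le_iff₀ (by linarith : (0:ℝ) < nuZ n + 1)]
  nlinarith [tanh_one_pos]

lemma muZ_abs (k : ℤ) : |muZ k| = nuZ k := by
  unfold muZ nuZ
  split
  · rw [neg_one_mul, abs_neg, abs_of_nonneg (Real.sqrt_nonneg _)]
  · rw [one_mul, abs_of_nonneg (Real.sqrt_nonneg _)]

lemma muZ_eq_of_pos {k : ℤ} (h : 0 < k) : muZ k = nuZ k := by
  unfold muZ nuZ; rw [if_neg (by omega)]; ring

lemma muZ_eq_of_neg {k : ℤ} (h : k < 0) : muZ k = -nuZ k := by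
  unfold muZ nuZ; rw [if_pos h]; ring

/-- Key gap estimate. -/
lemma muZ_key_gap {j k : ℤ} (hj : j ≠ 0) (hk : k ≠ 0) (hne : muZ j ≠ muZ k) :
    Real.tanh 1 / 2 / (max |muZ j| |muZ k| + 1) ≤ |muZ j - muZ k| := by
  have habsj := muZ_abs j
  have habsk := muZ_abs k
  have hc := tanh_one_pos
  have hνj := nuZ_nonneg j
  have hνk := nuZ_nonneg k
  -- helper for the same-sign case
  have same : ∀ a b : ℤ, a ≠ 0 → b ≠ 0 → |a| < |b| →
      Real.tanh 1 / 2 / (max (nuZ a) (nuZ b) + 1) ≤ |nuZ a - nuZ b| := by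
    intro a b ha hb hab
    have hgap := nuZ_gap ha hab
    have h1 : nuZ a ≤ nuZ b := by
      have := nuZ_sq_gap ha hab
      nlinarith [nuZ_nonneg a, nuZ_nonneg b]
    rw [max_eq_right h1, abs_of_nonpos (by linarith)]
    linarith
  -- opposite signs case helper
  have opp : ∀ a b : ℤ, a ≠ 0 → b ≠ 0 →
      Real.tanh 1 / 2 / (max (nuZ a) (nuZ b) + 1) ≤ nuZ a + nuZ b := by
    intro a b ha hb
    have h1 := nuZ_sq_ge a ha
    have h2 := nuZ_sq_ge b hb
    have hνa := nuZ_nonneg a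
    have hνb := nuZ_nonneg b
    rcases le_total (nuZ a) (nuZ b) with h | h
    · rw [max_eq_right h, div_le_iff₀ (by linarith : (0:ℝ) < nuZ b + 1)]
      nlinarith
    · rw [max_eq_left h, div_le_iff₀ (by linarith : (0:ℝ) < nuZ a + 1)]
      nlinarith
  rw [habsj, habsk]
  rcases lt_trichotomy j 0 with hj' | hj' | hj'
  · rcases lt_trichotomy k 0 with hk' | hk' | hk'
    · -- both negative
      rw [muZ_eq_of_neg hj', muZ_eq_of_neg hk',
        show -nuZ j - -nuZ k = nuZ k - nuZ j from by ring]
      have hne' : nuZ j ≠ nuZ k := fun h => hne (by rw [muZ_eq_of_neg hj', muZ_eq_of_neg hk', h])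
      have habs : |j| ≠ |k| := by
        intro h
        apply hne'
        unfold nuZ
        rw [← Int.cast_abs, ← Int.cast_abs, h]
      rcases habs.lt_or_gt with h | h
      · have := same j k hj hk h
        rwa [abs_sub_comm] at this
      · have := same k j hk hj h
        rwa [max_comm] at this
    · exact absurd hk' hk
    · -- j neg, k pos
      rw [muZ_eq_of_neg hj', muZ_eq_of_pos hk']
      have : |(-nuZ j) - nuZ k| = nuZ j + nuZ k := by
        rw [abs_of_nonpos (by linarith)]; ring
      rw [this]
      exact opp j k hj hk
  · exact absurd hj' hj
  · rcases lt_trichotomy k 0 with hk' | hk' | hk'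
    · -- j pos, k neg
      rw [muZ_eq_of_pos hj', muZ_eq_of_neg hk']
      have : |nuZ j - -nuZ k| = nuZ j + nuZ k := by
        rw [abs_of_nonneg (by linarith)]; ring
      rw [this]
      exact opp j k hj hk
    · exact absurd hk' hk
    · -- both positive
      rw [muZ_eq_of_pos hj', muZ_eq_of_pos hk']
      have hne' : nuZ j ≠ nuZ k := fun h => hne (by rw [muZ_eq_of_pos hj', muZ_eq_of_pos hk', h])
      have habs : |j| ≠ |k| := by
        intro h
        apply hne'
        unfold nuZ
        rw [← Int.cast_abs, ← Int.cast_abs, h]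
      rcases habs.lt_or_gt with h | h
      · exact same j k hj hk h
      · have := same k j hk hj h
        rwa [max_comm, abs_sub_comm] at this

/-- There exists `ε > 0` such that for every `ω` with `|ω| ≥ 1`, the interval
`[ω - ε/|ω|, ω + ε/|ω|]` contains at most one element of `{μ_k : k ∈ ℤ, k ≠ 0}`. -/
theorem muZ_spectral_gap :
    ∃ ε : ℝ, 0 < ε ∧ ∀ ω : ℝ, 1 ≤ |ω| →
      Set.Subsingleton
        ({x : ℝ | ∃ k : ℤ, k ≠ 0 ∧ x = muZ k} ∩
          Set.Icc (ω - ε / |ω|) (ω + ε / |ω|)) := by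
  have hc := tanh_one_pos
  have hc1 := tanh_lt_one' 1
  refine ⟨Real.tanh 1 / 16, by linarith, ?_⟩
  intro ω hω x hx y hy
  by_contra hxy
  obtain ⟨⟨j, hj, hxj⟩, hx1, hx2⟩ := hx
  obtain ⟨⟨k, hk, hyk⟩, hy1, hy2⟩ := hy
  have hωpos : (0:ℝ) < |ω| := by linarith
  set ε := Real.tanh 1 / 16 with hε
  have hεpos : 0 < ε := by positivity
  have hne : muZ j ≠ muZ k := by rw [← hxj, ← hyk]; exact hxy
  have hgap := muZ_key_gap hj hk hne
  rw [← hxj, ← hyk] at hgap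
  set M := max |x| |y| with hM
  have hMnn : 0 ≤ M := le_trans (abs_nonneg x) (le_max_left _ _)
  have hMpos : 0 < M + 1 := by linarith
  have h1 : Real.tanh 1 / 2 ≤ |x - y| * (M + 1) := (div_le_iff₀ hMpos).mp hgap
  -- bound on |x - y|
  have hr : ε / |ω| ≤ ε := by
    rw [div_le_iff₀ hωpos]; nlinarith
  have hd : |x - y| ≤ 2 * (ε / |ω|) := by
    rw [abs_sub_le_iff]; constructor <;> linarith
  have hdω : |x - y| * |ω| ≤ 2 * ε := by
    calc |x - y| * |ω| ≤ 2 * (ε / |ω|) * |ω| :=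
          mul_le_mul_of_nonneg_right hd hωpos.le
      _ = 2 * ε := by field_simp
  -- bound on M
  have hxb : |x| ≤ |ω| + ε := by
    have : |x - ω| ≤ ε / |ω| := by rw [abs_sub_le_iff]; constructor <;> linarith
    have := abs_sub_abs_le_abs_sub x ω
    linarith
  have hyb : |y| ≤ |ω| + ε := by
    have : |y - ω| ≤ ε / |ω| := by rw [abs_sub_le_iff]; constructor <;> linarith
    have := abs_sub_abs_le_abs_sub y ω
    linarith
  have hMb : M ≤ |ω| + ε := max_le hxb hyb
  have hdnn : 0 ≤ |x - y| := abs_nonneg _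
  -- contradiction
  nlinarith [mul_le_mul_of_nonneg_right hdω (le_of_lt hMpos),
    mul_le_mul_of_nonneg_left hMb hdnn,
    mul_le_mul_of_nonneg_right h1 (le_of_lt hωpos)]
end

section
/- Let μ_k = √(k·tanh(k)) for every integer k ≥ 1. Then for all k ≥ 1, 0 ≤ √k - μ_k ≤ 2·√k·exp(-2k). -/
open Real

/-- `μ_k = √(k tanh k)`. -/
noncomputable def muWW (k : ℕ) : ℝ :=
  Real.sqrt ((k : ℝ) * Real.tanh (k : ℝ))

/-- For all `k ≥ 1`, `0 ≤ √k - μ_k ≤ 2 √k e^{-2k}`: `μ_k ≈ √k` with exponentially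
small error. -/
theorem muWW_close_to_sqrt (k : ℕ) (hk : 1 ≤ k) :
    0 ≤ Real.sqrt (k : ℝ) - muWW k
    ∧ Real.sqrt (k : ℝ) - muWW k ≤ 2 * Real.sqrt (k : ℝ) * Real.exp (-2 * (k : ℝ)) := by
  have hk0 : (0 : ℝ) ≤ (k : ℝ) := Nat.cast_nonneg k
  have ha : (0 : ℝ) < Real.exp (k : ℝ) := Real.exp_pos _
  have hb : (0 : ℝ) < Real.exp (-(k : ℝ)) := Real.exp_pos _
  have hab : Real.exp (k : ℝ) * Real.exp (-(k : ℝ)) = 1 := by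
    rw [← Real.exp_add]; simp
  have he2 : Real.exp (-2 * (k : ℝ)) = Real.exp (-(k : ℝ)) * Real.exp (-(k : ℝ)) := by
    rw [← Real.exp_add]; ring_nf
  have hcosh : (0 : ℝ) < Real.cosh (k : ℝ) := Real.cosh_pos _
  have htanh_def : Real.tanh (k : ℝ) = Real.sinh (k : ℝ) / Real.cosh (k : ℝ) :=
    Real.tanh_eq_sinh_div_cosh _
  have hle : Real.exp (-(k : ℝ)) ≤ Real.exp (k : ℝ) := Real.exp_le_exp.mpr (by linarith)
  have htanh0 : 0 ≤ Real.tanh (k : ℝ) := by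
    rw [htanh_def]
    apply div_nonneg _ hcosh.le
    rw [Real.sinh_eq]; linarith
  have htanh1 : Real.tanh (k : ℝ) ≤ 1 := by
    rw [htanh_def, div_le_one hcosh, Real.sinh_eq, Real.cosh_eq]
    linarith
  have hkey : 1 - Real.tanh (k : ℝ) ≤ 2 * Real.exp (-2 * (k : ℝ)) := by
    rw [htanh_def, he2, sub_le_comm, le_div_iff₀ hcosh, Real.sinh_eq, Real.cosh_eq]
    nlinarith [hab, hb, ha]
  have hst := Real.sqrt_nonneg (Real.tanh (k : ℝ))
  have hs1 : Real.sqrt (Real.tanh (k : ℝ)) ≤ 1 := by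
    rw [show (1:ℝ) = Real.sqrt 1 by simp]
    exact Real.sqrt_le_sqrt htanh1
  have hsq : Real.sqrt (Real.tanh (k : ℝ)) ^ 2 = Real.tanh (k : ℝ) :=
    Real.sq_sqrt htanh0
  have hts : Real.tanh (k : ℝ) ≤ Real.sqrt (Real.tanh (k : ℝ)) := by
    nlinarith
  have hmu : muWW k = Real.sqrt (k : ℝ) * Real.sqrt (Real.tanh (k : ℝ)) := by
    rw [muWW, Real.sqrt_mul hk0]
  have hsk := Real.sqrt_nonneg (k : ℝ)
  constructor
  · rw [hmu]; nlinarith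
  · rw [hmu]; nlinarith [mul_le_mul_of_nonneg_left hkey hsk]
end

section
/- Let ε ∈ (0,1) and let h : [-1,0] → ℝ be continuously differentiable with ∫_{-1}^0 h(y) dy = 0 and sup_{y∈[-1,0]} |h'(y)| < ((1-ε)·tanh(1) / (1 - 2/e)) · |h(0)|, where e is the base of the natural logarithm. Then inf over integers k ≥ 1 of (k / cosh(k)) · | ∫_{-1}^0 h(y)·cosh(k·(y+1)) dy | is strictly positive. -/
open Real

/-- If `f a = 0` and the derivative of `f` is nonnegative on `[a,∞)`, then `f ≥ 0` there. -/
private lemma nonneg_of_deriv_aux (a : ℝ) (f f' : ℝ → ℝ)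
    (hf : ∀ x, HasDerivAt f (f' x) x) (hc : Continuous f')
    (h0 : f a = 0) (hnn : ∀ x, a ≤ x → 0 ≤ f' x) :
    ∀ t, a ≤ t → 0 ≤ f t := by
  intro t ht
  have h1 : ∫ x in a..t, f' x = f t - f a :=
    intervalIntegral.integral_eq_sub_of_hasDerivAt (fun x _ => hf x)
      (hc.intervalIntegrable a t)
  have h2 : 0 ≤ ∫ x in a..t, f' x :=
    intervalIntegral.integral_nonneg ht fun u hu => hnn u hu.1
  linarith

private lemma sinh_aux1 : ∀ t : ℝ, 0 ≤ t → 0 ≤ Real.sinh t - t := by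
  refine nonneg_of_deriv_aux 0 _ (fun x => Real.cosh x - 1) (fun x => ?_) (by continuity)
    (by simp) (fun x _ => by simpa using Real.one_le_cosh x)
  exact ((Real.hasDerivAt_sinh x).sub (hasDerivAt_id' (x := x))).congr_deriv (by ring)

private lemma sinh_aux2 : ∀ t : ℝ, 0 ≤ t → 0 ≤ Real.cosh t - 1 - t * t / 2 := by
  refine nonneg_of_deriv_aux 0 _ (fun x => Real.sinh x - x) (fun x => ?_) (by continuity)
    (by simp) (fun x hx => sinh_aux1 x hx)
  have h := ((Real.hasDerivAt_cosh x).sub_const 1).sub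
    (((hasDerivAt_id' (x := x)).mul (hasDerivAt_id' (x := x))).div_const 2)
  exact h.congr_deriv (by ring)

private lemma sinh_aux3 : ∀ t : ℝ, 0 ≤ t → 0 ≤ t * Real.cosh t - Real.sinh t := by
  refine nonneg_of_deriv_aux 0 _ (fun x => x * Real.sinh x) (fun x => ?_) (by continuity)
    (by simp) (fun x hx => by
      simpa using mul_nonneg hx (Real.sinh_nonneg_iff.mpr hx))
  have h := ((hasDerivAt_id' (x := x)).mul (Real.hasDerivAt_cosh x)).sub (Real.hasDerivAt_sinh x)
  exact h.congr_deriv (by ring)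

private lemma sinh_aux4 : ∀ t : ℝ, 0 ≤ t → 0 ≤ t * Real.sinh t + 2 - 2 * Real.cosh t := by
  refine nonneg_of_deriv_aux 0 _ (fun x => x * Real.cosh x - Real.sinh x) (fun x => ?_)
    (by continuity) (by simp) (fun x hx => sinh_aux3 x hx)
  have h := (((hasDerivAt_id' (x := x)).mul (Real.hasDerivAt_sinh x)).add_const 2).sub
    ((Real.hasDerivAt_cosh x).const_mul 2)
  exact h.congr_deriv (by ring)

private lemma sinh_aux5 : ∀ t : ℝ, 0 ≤ t → 0 ≤ t * Real.cosh t + 2 * t - 3 * Real.sinh t := by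
  refine nonneg_of_deriv_aux 0 _ (fun x => x * Real.sinh x + 2 - 2 * Real.cosh x) (fun x => ?_)
    (by continuity) (by simp) (fun x hx => sinh_aux4 x hx)
  have h := (((hasDerivAt_id' (x := x)).mul (Real.hasDerivAt_cosh x)).add
    ((hasDerivAt_id' (x := x)).const_mul 2)).sub ((Real.hasDerivAt_sinh x).const_mul 3)
  exact h.congr_deriv (by ring)

private lemma sinh_aux6 : ∀ t : ℝ, 0 ≤ t → 0 ≤ t * Real.sinh t + t * t - 4 * Real.cosh t + 4 := by
  refine nonneg_of_deriv_aux 0 _ (fun x => x * Real.cosh x + 2 * x - 3 * Real.sinh x)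
    (fun x => ?_) (by continuity) (by simp) (fun x hx => sinh_aux5 x hx)
  have h := ((((hasDerivAt_id' (x := x)).mul (Real.hasDerivAt_sinh x)).add
    ((hasDerivAt_id' (x := x)).mul (hasDerivAt_id' (x := x)))).sub
    ((Real.hasDerivAt_cosh x).const_mul 4)).add_const 4
  exact h.congr_deriv (by ring)

private lemma sinh_aux7 : ∀ t : ℝ, 1 ≤ t → 0 ≤ Real.sinh t - Real.sinh 1 * t := by
  refine nonneg_of_deriv_aux 1 _ (fun x => Real.cosh x - Real.sinh 1) (fun x => ?_)
    (by continuity) (by simp) (fun x hx => ?_)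
  · exact ((Real.hasDerivAt_sinh x).sub ((hasDerivAt_id' (x := x)).const_mul (Real.sinh 1))).congr_deriv (by ring)
  · have h1 : Real.cosh 1 ≤ Real.cosh x := Real.cosh_le_cosh.mpr (by
      rw [abs_of_nonneg (by norm_num : (0:ℝ) ≤ 1), abs_of_nonneg (by linarith)]; exact hx)
    have h2 : Real.cosh 1 - Real.sinh 1 = Real.exp (-1) := Real.cosh_sub_sinh 1
    have h3 : 0 < Real.exp (-1) := Real.exp_pos _
    simpa using by linarith

private lemma ftc_within (f f' : ℝ → ℝ)
    (hd : ∀ y ∈ Set.Icc (-1:ℝ) 0, HasDerivWithinAt f (f' y) (Set.Icc (-1:ℝ) 0) y)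
    (hc : ContinuousOn f' (Set.Icc (-1:ℝ) 0)) :
    ∫ y in (-1:ℝ)..0, f' y = f 0 - f (-1) := by
  have hab : (-1:ℝ) ≤ 0 := by norm_num
  refine intervalIntegral.integral_eq_sub_of_hasDeriv_right_of_le hab
    (fun y hy => (hd y hy).continuousWithinAt) (fun y hy => ?_) ?_
  · exact ((hd y (Set.Ioo_subset_Icc_self hy)).hasDerivAt
      (Icc_mem_nhds hy.1 hy.2)).hasDerivWithinAt
  · exact (by rw [Set.uIcc_of_le hab]; exact hc : ContinuousOn f'
      (Set.uIcc (-1:ℝ) 0)).intervalIntegrable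

set_option maxHeartbeats 1000000 in
/-- Sufficient condition for the quantitative strategic condition: if `h` is continuously
differentiable on `[-1,0]`, has zero mean, and its derivative satisfies
`sup |h'| < ((1-ε) tanh 1 / (1 - 2/e)) |h(0)|` for some `ε ∈ (0,1)`, then
`inf_{k≥1} (k/cosh k) |∫_{-1}^0 h(y) cosh(k(y+1)) dy| > 0`.
(The infimum over `k ≥ 1` is encoded as an infimum over `k : ℕ` of the expression at
`k + 1`.) -/
theorem strategic_profile_sufficient_condition
    (ε : ℝ) (hε : ε ∈ Set.Ioo (0:ℝ) 1)
    (h h' : ℝ → ℝ)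
    (hderiv : ∀ y ∈ Set.Icc (-1:ℝ) 0, HasDerivWithinAt h (h' y) (Set.Icc (-1:ℝ) 0) y)
    (hcont : ContinuousOn h' (Set.Icc (-1:ℝ) 0))
    (hmean : ∫ y in (-1:ℝ)..0, h y = 0)
    (hsmall : (⨆ y ∈ Set.Icc (-1:ℝ) 0, |h' y|)
        < ((1 - ε) * Real.tanh 1 / (1 - 2 / Real.exp 1)) * |h 0|) :
    0 < ⨅ k : ℕ, (((k : ℝ) + 1) / Real.cosh ((k : ℝ) + 1)) *
        |∫ y in (-1:ℝ)..0, h y * Real.cosh (((k : ℝ) + 1) * (y + 1))| := by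
  obtain ⟨hε0, hε1⟩ := hε
  have hab : (-1:ℝ) ≤ 0 := by norm_num
  have huIcc : Set.uIcc (-1:ℝ) 0 = Set.Icc (-1:ℝ) 0 := Set.uIcc_of_le hab
  have hContOn : ContinuousOn h (Set.Icc (-1:ℝ) 0) :=
    fun y hy => (hderiv y hy).continuousWithinAt
  set M := ⨆ y ∈ Set.Icc (-1:ℝ) 0, |h' y| with hMdef
  -- M bounds |h'| on the interval
  obtain ⟨B, hB⟩ := isCompact_Icc.exists_bound_of_continuousOn hcont
  have hbdd : BddAbove (Set.range fun y => ⨆ _ : y ∈ Set.Icc (-1:ℝ) 0, |h' y|) := by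
    refine ⟨max B 0, ?_⟩
    rintro _ ⟨z, rfl⟩
    by_cases hz : z ∈ Set.Icc (-1:ℝ) 0
    · have : (⨆ _ : z ∈ Set.Icc (-1:ℝ) 0, |h' z|) = |h' z| :=
        ciSup_pos (f := fun _ => |h' z|) hz
      simp only [this]
      exact le_max_of_le_left (by simpa using hB z hz)
    · simp [hz, Real.iSup_of_isEmpty]
  have hMle : ∀ y ∈ Set.Icc (-1:ℝ) 0, |h' y| ≤ M := by
    intro y hy
    calc |h' y| = ⨆ _ : y ∈ Set.Icc (-1:ℝ) 0, |h' y| :=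
          (ciSup_pos (f := fun _ => |h' y|) hy).symm
      _ ≤ M := le_ciSup hbdd y
  have hM0 : 0 ≤ M := le_trans (abs_nonneg _) (hMle 0 (by norm_num))
  clear_value M
  -- numeric facts
  have hexp : (2.7182818283 : ℝ) < Real.exp 1 := Real.exp_one_gt_d9
  have hexppos : (0:ℝ) < Real.exp 1 := Real.exp_pos 1
  have hinv : Real.exp 1 * Real.exp (-1) = 1 := by
    rw [← Real.exp_add]; norm_num
  have hinvpos : 0 < Real.exp (-1) := Real.exp_pos _
  have hebound : Real.exp (-1) < 0.37 := by
    nlinarith [hinv, hexp, hinvpos]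
  have hs1 : (1:ℝ) < Real.sinh 1 := by
    rw [Real.sinh_eq]
    linarith
  have hs1pos : (0:ℝ) < Real.sinh 1 := by linarith
  have hc1pos : (0:ℝ) < Real.cosh 1 := Real.cosh_pos 1
  have hsc1 : Real.sinh 1 < Real.cosh 1 := by
    have := Real.cosh_sub_sinh 1; linarith
  have hden : (0:ℝ) < 1 - 2 / Real.exp 1 := by
    rw [sub_pos, div_lt_one hexppos]; linarith
  set c₀ := Real.tanh 1 / (1 - 2 / Real.exp 1) with hc₀def
  have htanh1 : Real.tanh 1 = Real.sinh 1 / Real.cosh 1 := Real.tanh_eq_sinh_div_cosh 1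
  have htanhpos : 0 < Real.tanh 1 := by rw [htanh1]; positivity
  have hc₀pos : 0 < c₀ := div_pos htanhpos hden
  have hc₀4 : c₀ ≤ 4 := by
    rw [hc₀def, div_le_iff₀ hden]
    have ht1 : Real.tanh 1 < 1 := by rw [htanh1, div_lt_one hc1pos]; exact hsc1
    have h2e : 2 / Real.exp 1 < 3/4 := by
      rw [div_lt_iff₀ hexppos]; linarith
    linarith
  -- h 0 ≠ 0
  have hh0 : 0 < |h 0| := by
    by_contra hcon
    push_neg at hcon
    have h0 : |h 0| = 0 := le_antisymm hcon (abs_nonneg _)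
    rw [h0, mul_zero] at hsmall
    linarith
  have hM4 : M ≤ (1 - ε) * c₀ * |h 0| := by
    have heq : (1 - ε) * Real.tanh 1 / (1 - 2 / Real.exp 1) = (1 - ε) * c₀ := by
      rw [hc₀def]; ring
    rw [heq] at hsmall
    exact le_of_lt hsmall
  clear_value c₀
  -- the uniform lower bound
  have hfrac : 0 < 1 - 1 / Real.sinh 1 := by
    rw [sub_pos, div_lt_one hs1pos]; exact hs1
  have hδpos : 0 < ε * ((1 - 1 / Real.sinh 1) * (Real.sinh 1 / Real.cosh 1) * |h 0|) := by
    positivity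
  refine lt_of_lt_of_le hδpos (le_ciInf ?_)
  intro k
  set κ : ℝ := (k : ℝ) + 1 with hκdef
  have hκ1 : (1:ℝ) ≤ κ := by
    rw [hκdef]; have : (0:ℝ) ≤ (k:ℝ) := Nat.cast_nonneg k; linarith
  have hκpos : (0:ℝ) < κ := by linarith
  have hcKpos : (0:ℝ) < Real.cosh κ := Real.cosh_pos κ
  clear_value κ
  -- continuity helpers
  have hlincont : Continuous fun y : ℝ => κ * (y + 1) :=
    continuous_const.mul (continuous_id.add continuous_const)
  have hsinhcont : Continuous fun y : ℝ => Real.sinh (κ * (y + 1)) :=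
    Real.continuous_sinh.comp hlincont
  have hcoshcont : Continuous fun y : ℝ => Real.cosh (κ * (y + 1)) :=
    Real.continuous_cosh.comp hlincont
  have hII : ∀ (g : ℝ → ℝ), ContinuousOn g (Set.Icc (-1:ℝ) 0) →
      IntervalIntegrable g MeasureTheory.volume (-1) 0 := by
    intro g hg
    apply ContinuousOn.intervalIntegrable
    rwa [huIcc]
  have hint1 : IntervalIntegrable h MeasureTheory.volume (-1) 0 := hII h hContOn
  have hint2 : IntervalIntegrable (fun y => (y + 1) * h' y) MeasureTheory.volume (-1) 0 :=
    hII _ ((continuous_id.add continuous_const).continuousOn.mul hcont)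
  have hint3 : IntervalIntegrable (fun y => h' y * Real.sinh (κ * (y + 1)))
      MeasureTheory.volume (-1) 0 := hII _ (hcont.mul hsinhcont.continuousOn)
  have hint4 : IntervalIntegrable (fun y => κ * (h y * Real.cosh (κ * (y + 1))))
      MeasureTheory.volume (-1) 0 :=
    hII _ (continuousOn_const.mul (hContOn.mul hcoshcont.continuousOn))
  have hint6 : IntervalIntegrable (fun y => h' y * (Real.sinh (κ * (y + 1)) - κ * (y + 1)))
      MeasureTheory.volume (-1) 0 :=
    hII _ (hcont.mul (hsinhcont.sub hlincont).continuousOn)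
  -- Identity A : ∫ (y+1) h' = h 0
  have hIdA : ∫ y in (-1:ℝ)..0, ((y + 1) * h' y) = h 0 := by
    have hftc := ftc_within (fun y => (y + 1) * h y) (fun y => h y + (y + 1) * h' y)
      (fun y hy => by
        have hder := ((hasDerivWithinAt_id y (Set.Icc (-1:ℝ) 0)).add_const 1).mul (hderiv y hy)
        exact hder.congr_deriv (by simp only [id_eq]; ring))
      (hContOn.add ((continuous_id.add continuous_const).continuousOn.mul hcont))
    rw [intervalIntegral.integral_add hint1 hint2, hmean] at hftc
    simpa using hftc
  -- Identity B : S + κ * I = h 0 * sinh κ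
  set S := ∫ y in (-1:ℝ)..0, h' y * Real.sinh (κ * (y + 1)) with hSdef
  set I := ∫ y in (-1:ℝ)..0, h y * Real.cosh (κ * (y + 1)) with hIdef
  have hIdB : S + κ * I = h 0 * Real.sinh κ := by
    have hftc := ftc_within (fun y => h y * Real.sinh (κ * (y + 1)))
      (fun y => h' y * Real.sinh (κ * (y + 1)) + κ * (h y * Real.cosh (κ * (y + 1))))
      (fun y hy => by
        have hin : HasDerivAt (fun y : ℝ => Real.sinh (κ * (y + 1)))
            (Real.cosh (κ * (y + 1)) * (κ * 1)) y :=
          by have := (Real.hasDerivAt_sinh (κ * (y + 1))).comp y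
               (((hasDerivAt_id' (x := y)).add_const 1).const_mul κ); exact this
        have hder := (hderiv y hy).mul hin.hasDerivWithinAt
        exact hder.congr_deriv (by ring))
      ((hcont.mul hsinhcont.continuousOn).add
        (continuousOn_const.mul (hContOn.mul hcoshcont.continuousOn)))
    rw [intervalIntegral.integral_add hint3 hint4, intervalIntegral.integral_const_mul] at hftc
    beta_reduce at hftc
    rw [show κ * ((0:ℝ) + 1) = κ by ring, show κ * ((-1:ℝ) + 1) = 0 by ring,
      Real.sinh_zero, mul_zero, sub_zero] at hftc
    exact hftc
  -- Identity C : the value of the comparison integral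
  have hE : ∫ y in (-1:ℝ)..0, (Real.sinh (κ * (y + 1)) - κ * (y + 1))
      = Real.cosh κ / κ - κ / 2 - 1 / κ := by
    have hF : ∀ y ∈ Set.uIcc (-1:ℝ) 0,
        HasDerivAt (fun y : ℝ => Real.cosh (κ * (y + 1)) / κ - κ * ((y + 1) * (y + 1)) / 2)
          (Real.sinh (κ * (y + 1)) - κ * (y + 1)) y := by
      intro y _
      have hin : HasDerivAt (fun y : ℝ => Real.cosh (κ * (y + 1)))
          (Real.sinh (κ * (y + 1)) * (κ * 1)) y :=
        by have := (Real.hasDerivAt_cosh (κ * (y + 1))).comp y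
             (((hasDerivAt_id' (x := y)).add_const 1).const_mul κ); exact this
      have h2 := (hin.div_const κ).sub
        (((((hasDerivAt_id' (x := y)).add_const 1).mul
          ((hasDerivAt_id' (x := y)).add_const 1)).const_mul κ).div_const 2)
      exact h2.congr_deriv (by field_simp; ring)
    rw [intervalIntegral.integral_eq_sub_of_hasDerivAt hF
      ((hsinhcont.sub hlincont).intervalIntegrable (-1) 0)]
    rw [show κ * ((0:ℝ) + 1) = κ by ring, show κ * ((-1:ℝ) + 1) = 0 by ring, Real.cosh_zero]
    field_simp
    ring
  set E := Real.cosh κ / κ - κ / 2 - 1 / κ with hEdef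
  clear_value E
  -- D and its bound
  set D := ∫ y in (-1:ℝ)..0, h' y * (Real.sinh (κ * (y + 1)) - κ * (y + 1)) with hDdef
  clear_value D
  have hD : D = S - κ * h 0 := by
    have hfun : (fun y => h' y * (Real.sinh (κ * (y + 1)) - κ * (y + 1)))
        = fun y => h' y * Real.sinh (κ * (y + 1)) - κ * ((y + 1) * h' y) := by
      funext y; ring
    rw [hDdef, hfun, intervalIntegral.integral_sub hint3 (hint2.const_mul κ),
      intervalIntegral.integral_const_mul, hIdA]
  have hDb : |D| ≤ M * E := by
    have habs : |D| ≤ ∫ y in (-1:ℝ)..0, |h' y * (Real.sinh (κ * (y + 1)) - κ * (y + 1))| := by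
      rw [hDdef]
      exact intervalIntegral.abs_integral_le_integral_abs hab
    have hmono : (∫ y in (-1:ℝ)..0, |h' y * (Real.sinh (κ * (y + 1)) - κ * (y + 1))|)
        ≤ ∫ y in (-1:ℝ)..0, M * (Real.sinh (κ * (y + 1)) - κ * (y + 1)) := by
      refine intervalIntegral.integral_mono_on hab hint6.abs
        (((hsinhcont.sub hlincont).intervalIntegrable (-1) 0).const_mul M) ?_
      intro y hy
      have hy1 : 0 ≤ κ * (y + 1) := mul_nonneg (le_of_lt hκpos) (by linarith [hy.1])
      have hg : 0 ≤ Real.sinh (κ * (y + 1)) - κ * (y + 1) := sinh_aux1 _ hy1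
      rw [abs_mul, abs_of_nonneg hg]
      exact mul_le_mul_of_nonneg_right (hMle y hy) hg
    rw [intervalIntegral.integral_const_mul, hE] at hmono
    linarith
  -- scalar inequalities at κ
  have hκ0' : (0:ℝ) ≤ κ := le_of_lt hκpos
  have s1κ : 0 ≤ Real.sinh κ - κ := sinh_aux1 κ hκ0'
  have s2κ : 0 ≤ Real.cosh κ - 1 - κ * κ / 2 := sinh_aux2 κ hκ0'
  have s6κ : 0 ≤ κ * Real.sinh κ + κ * κ - 4 * Real.cosh κ + 4 := sinh_aux6 κ hκ0'
  have s7κ : 0 ≤ Real.sinh κ - Real.sinh 1 * κ := sinh_aux7 κ hκ1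
  have s9 : Real.sinh 1 * Real.cosh κ ≤ Real.sinh κ * Real.cosh 1 := by
    have hnn : 0 ≤ Real.sinh (κ - 1) := Real.sinh_nonneg_iff.mpr (by linarith)
    rw [Real.sinh_sub] at hnn
    linarith
  -- E ≥ 0 and c₀ * E ≤ sinh κ - κ
  have hEeq : E = (Real.cosh κ - 1 - κ * κ / 2) / κ := by
    rw [hEdef]
    field_simp
    ring
  have hE0 : 0 ≤ E := by
    rw [hEeq]
    exact div_nonneg (by linarith) (le_of_lt hκpos)
  have hc0E : c₀ * E ≤ Real.sinh κ - κ := by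
    rw [hEeq, ← mul_div_assoc, div_le_iff₀ hκpos]
    linarith [mul_nonneg (by linarith : (0:ℝ) ≤ 4 - c₀) s2κ, s6κ]
  -- assemble: ε |h0| (sinh κ - κ) ≤ |κ I|
  have hκI : κ * I = h 0 * (Real.sinh κ - κ) - D := by
    linear_combination hIdB + hD
  have habs1 : |h 0| * (Real.sinh κ - κ) - |D| ≤ |κ * I| := by
    rw [hκI]
    calc |h 0| * (Real.sinh κ - κ) - |D|
        = |h 0 * (Real.sinh κ - κ)| - |D| := by
          rw [abs_mul, abs_of_nonneg s1κ]
      _ ≤ |h 0 * (Real.sinh κ - κ) - D| := abs_sub_abs_le_abs_sub _ _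
  have hfin : ε * |h 0| * (Real.sinh κ - κ) ≤ |κ * I| := by
    have hp1 := mul_le_mul_of_nonneg_right hM4 hE0
    have hp2 := mul_le_mul_of_nonneg_left hc0E
      (mul_nonneg (by linarith : (0:ℝ) ≤ 1 - ε) (abs_nonneg (h 0)))
    linarith [habs1, hDb]
  -- final comparison
  have hchain : (1 - 1 / Real.sinh 1) * (Real.sinh 1 / Real.cosh 1 * Real.cosh κ)
      ≤ Real.sinh κ - κ := by
    have hA : Real.sinh 1 / Real.cosh 1 * Real.cosh κ ≤ Real.sinh κ := by
      rw [div_mul_eq_mul_div, div_le_iff₀ hc1pos]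
      linarith
    have step1 : (1 - 1 / Real.sinh 1) * (Real.sinh 1 / Real.cosh 1 * Real.cosh κ)
        ≤ (1 - 1 / Real.sinh 1) * Real.sinh κ :=
      mul_le_mul_of_nonneg_left hA (le_of_lt hfrac)
    have hkle : κ ≤ Real.sinh κ / Real.sinh 1 := by
      rw [le_div_iff₀ hs1pos]
      linarith
    have step2 : (1 - 1 / Real.sinh 1) * Real.sinh κ ≤ Real.sinh κ - κ := by
      have hexpand : (1 - 1 / Real.sinh 1) * Real.sinh κ
          = Real.sinh κ - Real.sinh κ / Real.sinh 1 := by ring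
      linarith
    linarith
  rw [div_mul_eq_mul_div, le_div_iff₀ hcKpos]
  calc ε * ((1 - 1 / Real.sinh 1) * (Real.sinh 1 / Real.cosh 1) * |h 0|) * Real.cosh κ
      = (ε * |h 0|) * ((1 - 1 / Real.sinh 1) * (Real.sinh 1 / Real.cosh 1 * Real.cosh κ)) := by
        ring
    _ ≤ (ε * |h 0|) * (Real.sinh κ - κ) :=
        mul_le_mul_of_nonneg_left hchain (mul_nonneg (le_of_lt hε0) (abs_nonneg _))
    _ ≤ |κ * I| := by linarith [hfin]
    _ = κ * |I| := by rw [abs_mul, abs_of_pos hκpos]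
end
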